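/- arXiv:2510.06147 — 2 statements merged into one kernel-verified Lean document; each statement's English description precedes it below -/
import Mathlib

section
/- Let q be a probability vector on Fin d with q i ≥ γ > 0 for all i and σ = diag(q). Let ρ_1, …, ρ_T be d-dimensional quantum states with tensor product ϱ and average ρ_avg, and set μ := D²_{Bχ}(ρ_avg‖σ). Define M := (1/T²)·∑_{s ≠ t} C_{st} − ((T−1)/T)·Id on (Fin T → Fin d). Then |Re(Tr[ϱ·M]) − μ| ≤ √(d/(γ·T))·√μ + (d−1)/T. -/
open scoped BigOperators ComplexOrder

noncomputable section

/-- A `d`-dimensional quantum state: positive semidefinite with trace 1. -/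
def IsState {d : ℕ} (ρ : Matrix (Fin d) (Fin d) ℂ) : Prop :=
  ρ.PosSemidef ∧ ρ.trace = 1

/-- Tensor product of `T` states on `ℂ^d`, indexed by `Fin T → Fin d`. -/
def tensorState {d T : ℕ} (ρ : Fin T → Matrix (Fin d) (Fin d) ℂ) :
    Matrix (Fin T → Fin d) (Fin T → Fin d) ℂ :=
  fun a b => ∏ t, ρ t (a t) (b t)

/-- Average of `T` states. -/
def avgState {d T : ℕ} (ρ : Fin T → Matrix (Fin d) (Fin d) ℂ) :
    Matrix (Fin d) (Fin d) ℂ :=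
  ((T : ℂ))⁻¹ • ∑ t, ρ t

/-- Bures χ²-divergence of `ρ` from `σ = diag q`. -/
def DBchi {d : ℕ} (q : Fin d → ℝ) (ρ : Matrix (Fin d) (Fin d) ℂ) : ℝ :=
  (∑ i, ∑ j, (2 / (q i + q j)) * ‖ρ i j‖ ^ 2) - 1

/-- The observable `C` applied to the `s`-th and `t`-th tensor factors. -/
def Cst {d T : ℕ} (q : Fin d → ℝ) (s t : Fin T) :
    Matrix (Fin T → Fin d) (Fin T → Fin d) ℂ :=
  fun a b =>
    if b s = a t ∧ b t = a s ∧ ∀ r, r ≠ s → r ≠ t → a r = b r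
    then ((2 / (q (a s) + q (a t)) : ℝ) : ℂ) else 0



lemma herm_conj {d : ℕ} {ρ : Matrix (Fin d) (Fin d) ℂ} (h : ρ.IsHermitian) (i j : Fin d) :
    ρ j i = starRingEnd ℂ (ρ i j) := by
  have := congrFun (congrFun h j) i
  simpa [Matrix.conjTranspose_apply] using this.symm

lemma psd_diag {d : ℕ} {ρ : Matrix (Fin d) (Fin d) ℂ} (h : ρ.PosSemidef) (i : Fin d) :
    0 ≤ (ρ i i).re ∧ (ρ i i).im = 0 := by
  have h1 := h.dotProduct_mulVec_nonneg (fun k => if k = i then 1 else 0)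
  have h2 : dotProduct (star (fun k => if k = i then (1:ℂ) else 0))
      (ρ.mulVec (fun k => if k = i then 1 else 0)) = ρ i i := by
    simp only [dotProduct, Matrix.mulVec, Pi.star_apply]
    have inner : ∀ k, (∑ l, ρ k l * (if l = i then (1:ℂ) else 0)) = ρ k i := by
      intro k
      rw [Finset.sum_eq_single i] <;> simp +contextual
    rw [Finset.sum_congr rfl fun k _ => by rw [inner k]]
    rw [Finset.sum_eq_single i] <;> simp +contextual
  rw [h2, Complex.le_def] at h1
  exact ⟨by simpa using h1.1, by simpa using h1.2.symm⟩

lemma quad_form_eval {d : ℕ} (ρ : Matrix (Fin d) (Fin d) ℂ) {i j : Fin d} (hij : i ≠ j) (c : ℂ) :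
    dotProduct (star (fun k => if k = i then c else if k = j then 1 else 0))
      (ρ.mulVec (fun k => if k = i then c else if k = j then 1 else 0))
      = (starRingEnd ℂ c) * c * ρ i i + (starRingEnd ℂ c) * ρ i j + c * ρ j i + ρ j j := by
  have inner : ∀ k, (∑ l, ρ k l * (if l = i then c else if l = j then 1 else 0)) = ρ k i * c + ρ k j := by
    intro k
    rw [Finset.sum_eq_add_of_mem i j (Finset.mem_univ _) (Finset.mem_univ _) hij]
    · simp [Ne.symm hij]
    · intro l _ hl
      simp [hl.1, hl.2]
  simp only [dotProduct, Matrix.mulVec, Pi.star_apply]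
  calc (∑ k, star (if k = i then c else if k = j then 1 else 0) *
          (∑ l, ρ k l * (if l = i then c else if l = j then 1 else 0)))
      = ∑ k, star (if k = i then c else if k = j then 1 else 0) * (ρ k i * c + ρ k j) := by
        refine Finset.sum_congr rfl fun k _ => by rw [inner k]
    _ = _ := by
        rw [Finset.sum_eq_add_of_mem i j (Finset.mem_univ _) (Finset.mem_univ _) hij]
        · simp [Ne.symm hij]; ring
        · intro l _ hl
          simp [hl.1, hl.2]

/-- |ρ i j|² ≤ ρ_ii ρ_jj for PSD ρ. -/
lemma psd_offdiag_sq {d : ℕ} {ρ : Matrix (Fin d) (Fin d) ℂ} (h : ρ.PosSemidef) (i j : Fin d) :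
    ‖ρ i j‖ ^ 2 ≤ (ρ i i).re * (ρ j j).re := by
  rcases eq_or_ne i j with rfl | hij
  · have hd := psd_diag h i
    rw [Complex.sq_norm, Complex.normSq_apply, hd.2]
    nlinarith
  · set a := (ρ i i).re with ha
    set b := (ρ j j).re with hb
    set A := ‖ρ i j‖ ^ 2 with hA
    have hA0 : 0 ≤ A := sq_nonneg _
    have ha0 : 0 ≤ a := (psd_diag h i).1
    have hb0 : 0 ≤ b := (psd_diag h j).1
    have hA' : A = (ρ i j).re^2 + (ρ i j).im^2 := by
      rw [hA, Complex.sq_norm, Complex.normSq_apply]; ring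
    have hre : (ρ j i).re = (ρ i j).re := by rw [herm_conj h.1 i j]; simp
    have him : (ρ j i).im = -(ρ i j).im := by rw [herm_conj h.1 i j]; simp
    have him_i : (ρ i i).im = 0 := (psd_diag h i).2
    have key : ∀ t : ℝ, 0 ≤ (a * A) * (t*t) + (-2*A) * t + b := by
      intro t
      have h1 := h.dotProduct_mulVec_nonneg (fun k => if k = i then (-(t:ℂ)) * ρ i j else if k = j then 1 else 0)
      rw [quad_form_eval ρ hij, Complex.le_def] at h1
      have h1 := h1.1
      simp only [Complex.add_re, Complex.mul_re, Complex.mul_im, Complex.neg_re, Complex.neg_im,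
        Complex.ofReal_re, Complex.ofReal_im, map_mul, map_neg, Complex.conj_ofReal,
        Complex.conj_re, Complex.conj_im, Complex.zero_re] at h1
      rw [him_i, hre, him] at h1
      rw [ha, hb, hA']
      nlinarith [h1]
    have disc := discrim_le_zero key
    rw [discrim] at disc
    rcases eq_or_lt_of_le hA0 with hz | hpos
    · nlinarith
    · nlinarith
lemma trace_tensor {d T : ℕ} (ρ : Fin T → Matrix (Fin d) (Fin d) ℂ) :
    (tensorState ρ).trace = ∏ t, (ρ t).trace := by
  simp only [Matrix.trace, Matrix.diag, tensorState]
  rw [Fintype.prod_sum]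

lemma trace_tensor_Cst {d T : ℕ} (q : Fin d → ℝ) (ρ : Fin T → Matrix (Fin d) (Fin d) ℂ)
    (htr : ∀ r, (ρ r).trace = 1) {s t : Fin T} (hst : s ≠ t) :
    (tensorState ρ * Cst q s t).trace
      = ∑ i, ∑ j, ((2 / (q i + q j) : ℝ) : ℂ) * (ρ s i j * ρ t j i) := by
  have expand : (tensorState ρ * Cst q s t).trace
      = ∑ a : Fin T → Fin d, ∑ b : Fin T → Fin d, tensorState ρ a b * Cst q s t b a := by
    simp [Matrix.trace, Matrix.mul_apply, Matrix.diag]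
  rw [expand]
  -- collapse the inner sum
  have step1 : ∀ a : Fin T → Fin d,
      (∑ b : Fin T → Fin d, tensorState ρ a b * Cst q s t b a)
        = tensorState ρ a (fun r => if r = s then a t else if r = t then a s else a r)
          * ((2 / (q (a t) + q (a s)) : ℝ) : ℂ) := by
    intro a
    set b0 : Fin T → Fin d := fun r => if r = s then a t else if r = t then a s else a r with hb0
    rw [Finset.sum_eq_single b0]
    · have hcond : (a s = b0 t ∧ a t = b0 s ∧ ∀ r, r ≠ s → r ≠ t → b0 r = a r) := by
        refine ⟨?_, ?_, ?_⟩
        · simp [hb0, Ne.symm hst]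
        · simp [hb0]
        · intro r hrs hrt; simp [hb0, hrs, hrt]
      have e1 : b0 s = a t := by simp [hb0]
      have e2 : b0 t = a s := by simp [hb0, Ne.symm hst]
      have : Cst q s t b0 a = ((2 / (q (a t) + q (a s)) : ℝ) : ℂ) := by
        simp only [Cst]
        rw [if_pos hcond, e1, e2]
      rw [this]
    · intro b _ hbne
      rw [Cst]
      by_cases hc : (a s = b t ∧ a t = b s ∧ ∀ r, r ≠ s → r ≠ t → b r = a r)
      · exfalso
        apply hbne
        funext r
        by_cases hrs : r = s
        · subst hrs; rw [hb0]; simp [hc.2.1.symm]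
        · by_cases hrt : r = t
          · subst hrt; simp [hb0, hc.1.symm, Ne.symm hst]
          · rw [hb0]; simp [hrs, hrt, hc.2.2 r hrs hrt]
      · rw [if_neg hc, mul_zero]
    · simp
  rw [Finset.sum_congr rfl fun a _ => step1 a]
  -- now expand over (i, j) = (a s, a t)
  have step2 : ∀ a : Fin T → Fin d,
      tensorState ρ a (fun r => if r = s then a t else if r = t then a s else a r)
          * ((2 / (q (a t) + q (a s)) : ℝ) : ℂ)
        = ∑ i, ∑ j, (if a s = i ∧ a t = j then
            tensorState ρ a (fun r => if r = s then a t else if r = t then a s else a r)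
              * ((2 / (q (a t) + q (a s)) : ℝ) : ℂ) else 0) := by
    intro a
    rw [Finset.sum_eq_single (a s)]
    · rw [Finset.sum_eq_single (a t)]
      · simp
      · intro j _ hj; simp [Ne.symm hj]
      · simp
    · intro i _ hi
      apply Finset.sum_eq_zero
      intro j _
      simp [Ne.symm hi]
    · simp
  rw [Finset.sum_congr rfl fun a _ => step2 a]
  rw [Finset.sum_comm]
  refine Finset.sum_congr rfl fun i _ => ?_
  rw [Finset.sum_comm]
  refine Finset.sum_congr rfl fun j _ => ?_
  -- fixed i j : sum over a
  set g : Fin T → Fin d → ℂ := fun r k =>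
    if r = s then (if k = i then ρ s i j else 0)
    else if r = t then (if k = j then ρ t j i else 0) else ρ r k k with hg
  have hterm : ∀ a : Fin T → Fin d,
      (if a s = i ∧ a t = j then
          tensorState ρ a (fun r => if r = s then a t else if r = t then a s else a r)
            * ((2 / (q (a t) + q (a s)) : ℝ) : ℂ) else 0)
        = (∏ r, g r (a r)) * ((2 / (q i + q j) : ℝ) : ℂ) := by
    intro a
    by_cases hc : a s = i ∧ a t = j
    · rw [if_pos hc]
      obtain ⟨h1, h2⟩ := hc
      have hprod : tensorState ρ a (fun r => if r = s then a t else if r = t then a s else a r)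
          = ∏ r, g r (a r) := by
        rw [tensorState]
        refine Finset.prod_congr rfl fun r _ => ?_
        by_cases hrs : r = s
        · subst hrs; simp [hg, h1, h2]
        · by_cases hrt : r = t
          · subst hrt; simp [hg, h1, h2, hrs]
          · simp [hg, hrs, hrt]
      rw [hprod, h1, h2, add_comm (q j) (q i)]
    · rw [if_neg hc]
      push_neg at hc
      by_cases h1 : a s = i
      · have h2 := hc h1
        have : g t (a t) = 0 := by simp [hg, Ne.symm hst, h2]
        rw [Finset.prod_eq_zero (Finset.mem_univ t) this, zero_mul]
      · have : g s (a s) = 0 := by simp [hg, h1]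
        rw [Finset.prod_eq_zero (Finset.mem_univ s) this, zero_mul]
  rw [Finset.sum_congr rfl fun a _ => hterm a, ← Finset.sum_mul, ← Fintype.prod_sum g]
  have hs' : (∑ k, g s k) = ρ s i j := by simp [hg]
  have ht' : (∑ k, g t k) = ρ t j i := by simp [hg, Ne.symm hst]
  have htmem : t ∈ Finset.univ.erase s := Finset.mem_erase.mpr ⟨Ne.symm hst, Finset.mem_univ t⟩
  rw [← Finset.mul_prod_erase Finset.univ _ (Finset.mem_univ s),
      ← Finset.mul_prod_erase _ _ htmem, hs', ht']
  have hrest : (∏ r ∈ (Finset.univ.erase s).erase t, ∑ k, g r k) = 1 := by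
    apply Finset.prod_eq_one
    intro r hr
    have hrt : r ≠ t := (Finset.mem_erase.mp hr).1
    have hrs : r ≠ s := (Finset.mem_erase.mp (Finset.mem_erase.mp hr).2).1
    have : (∑ k, g r k) = (ρ r).trace := by
      simp [hg, hrs, hrt, Matrix.trace, Matrix.diag]
    rw [this, htr r]
  rw [hrest, mul_one]
  ring

lemma cs_div {n : ℕ} (q f : Fin n → ℝ) (hq : ∀ i, 0 < q i) :
    (∑ i, f i) ^ 2 ≤ (∑ i, q i) * ∑ i, f i ^ 2 / q i := by
  have h := Finset.sum_mul_sq_le_sq_mul_sq Finset.univ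
    (fun i => Real.sqrt (q i)) (fun i => f i / Real.sqrt (q i))
  have e1 : ∀ i, Real.sqrt (q i) * (f i / Real.sqrt (q i)) = f i := by
    intro i
    rw [mul_comm, div_mul_cancel₀ _ (ne_of_gt (Real.sqrt_pos.mpr (hq i)))]
  have e2 : ∀ i, Real.sqrt (q i) ^ 2 = q i := fun i => Real.sq_sqrt (hq i).le
  have e3 : ∀ i, (f i / Real.sqrt (q i)) ^ 2 = f i ^ 2 / q i := by
    intro i; rw [div_pow, e2]
  calc (∑ i, f i) ^ 2 = (∑ i, Real.sqrt (q i) * (f i / Real.sqrt (q i))) ^ 2 := by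
        rw [Finset.sum_congr rfl fun i _ => (e1 i).symm]
    _ ≤ (∑ i, Real.sqrt (q i) ^ 2) * ∑ i, (f i / Real.sqrt (q i)) ^ 2 := h
    _ = (∑ i, q i) * ∑ i, f i ^ 2 / q i := by
        rw [Finset.sum_congr rfl fun i _ => e2 i, Finset.sum_congr rfl fun i _ => e3 i]
lemma Nself_bounds {d : ℕ} {q : Fin d → ℝ} (hq0 : ∀ i, 0 < q i) (hq1 : (∑ i, q i) = 1)
    {ρ : Matrix (Fin d) (Fin d) ℂ} (hpsd : ρ.PosSemidef) (htr : ρ.trace = 1) :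
    1 ≤ (∑ i, ∑ j, (2/(q i + q j)) * Complex.normSq (ρ i j)) ∧
    (∑ i, ∑ j, (2/(q i + q j)) * Complex.normSq (ρ i j)) ≤ ∑ i, (ρ i i).re / q i := by
  set p : Fin d → ℝ := fun i => (ρ i i).re with hp
  have hp0 : ∀ i, 0 ≤ p i := fun i => (psd_diag hpsd i).1
  have hpsum : ∑ i, p i = 1 := by
    have h1 : (∑ i, ρ i i) = 1 := by simpa [Matrix.trace, Matrix.diag] using htr
    have h2 := congrArg Complex.re h1
    simpa [Complex.re_sum] using h2
  have hdiagsq : ∀ i, Complex.normSq (ρ i i) = p i ^ 2 := by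
    intro i
    rw [Complex.normSq_apply, (psd_diag hpsd i).2]
    ring
  constructor
  · calc (1:ℝ) = (∑ i, p i) ^ 2 := by rw [hpsum]; norm_num
      _ ≤ (∑ i, q i) * ∑ i, p i ^ 2 / q i := cs_div q p hq0
      _ = ∑ i, p i ^ 2 / q i := by rw [hq1, one_mul]
      _ ≤ ∑ i, ∑ j, (2/(q i + q j)) * Complex.normSq (ρ i j) := by
          refine Finset.sum_le_sum fun i _ => ?_
          have hnn : ∀ j ∈ Finset.univ, 0 ≤ (2/(q i + q j)) * Complex.normSq (ρ i j) := by
            intro j _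
            have h3 : (0:ℝ) < q i + q j := by linarith [hq0 i, hq0 j]
            exact mul_nonneg (div_nonneg (by norm_num) h3.le) (Complex.normSq_nonneg _)
          have single := Finset.single_le_sum hnn (Finset.mem_univ i)
          refine le_trans (le_of_eq ?_) single
          rw [hdiagsq]
          field_simp [(hq0 i).ne']
          try ring
  · have key : ∀ i j, (2/(q i + q j)) * Complex.normSq (ρ i j)
        ≤ (p i / Real.sqrt (q i)) * (p j / Real.sqrt (q j)) := by
      intro i j
      have h1 : Complex.normSq (ρ i j) ≤ p i * p j := by
        rw [← Complex.sq_norm]; exact psd_offdiag_sq hpsd i j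
      have si := Real.sqrt_pos.mpr (hq0 i)
      have sj := Real.sqrt_pos.mpr (hq0 j)
      have h2 : 2/(q i + q j) ≤ 1/(Real.sqrt (q i) * Real.sqrt (q j)) := by
        rw [div_le_div_iff₀ (by linarith [hq0 i, hq0 j]) (by positivity)]
        nlinarith [sq_nonneg (Real.sqrt (q i) - Real.sqrt (q j)),
          Real.sq_sqrt (hq0 i).le, Real.sq_sqrt (hq0 j).le]
      calc (2/(q i + q j)) * Complex.normSq (ρ i j)
          ≤ (1/(Real.sqrt (q i) * Real.sqrt (q j))) * (p i * p j) := by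
            apply mul_le_mul h2 h1 (Complex.normSq_nonneg _) (by positivity)
        _ = (p i / Real.sqrt (q i)) * (p j / Real.sqrt (q j)) := by
            field_simp
            try ring
    calc (∑ i, ∑ j, (2/(q i + q j)) * Complex.normSq (ρ i j))
        ≤ ∑ i, ∑ j, (p i / Real.sqrt (q i)) * (p j / Real.sqrt (q j)) :=
          Finset.sum_le_sum fun i _ => Finset.sum_le_sum fun j _ => key i j
      _ = (∑ i, p i / Real.sqrt (q i)) ^ 2 := by
          rw [pow_two, Finset.sum_mul_sum]
      _ ≤ (∑ i, p i) * ∑ i, p i / q i := by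
          refine Finset.sum_sq_le_sum_mul_sum_of_sq_eq_mul Finset.univ
            (fun i _ => hp0 i) (fun i _ => div_nonneg (hp0 i) (hq0 i).le) (fun i _ => ?_)
          rw [div_pow, Real.sq_sqrt (hq0 i).le, pow_two, mul_div_assoc]
      _ = ∑ i, p i / q i := by rw [hpsum, one_mul]
      _ = ∑ i, (ρ i i).re / q i := rfl

lemma trace_re_sum {d : ℕ} {ρ : Matrix (Fin d) (Fin d) ℂ} (htr : ρ.trace = 1) :
    ∑ i, (ρ i i).re = 1 := by
  have h1 : (∑ i, ρ i i) = 1 := by simpa [Matrix.trace, Matrix.diag] using htr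
  have h2 := congrArg Complex.re h1
  simpa [Complex.re_sum] using h2

set_option maxHeartbeats 1000000 in
/-- Bias bound for the state-certification observable
`M = (1/T²) ∑_{s ≠ t} C_{st} - ((T-1)/T) Id`. -/
theorem certification_observable_bias (d T : ℕ) (hT : 1 ≤ T) (γ : ℝ) (hγ : 0 < γ)
    (q : Fin d → ℝ) (hq : ∀ i, γ ≤ q i) (hq1 : (∑ i, q i) = 1)
    (ρ : Fin T → Matrix (Fin d) (Fin d) ℂ) (hρ : ∀ t, IsState (ρ t))
    (μ : ℝ) (hμ : μ = DBchi q (avgState ρ))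
    (M : Matrix (Fin T → Fin d) (Fin T → Fin d) ℂ)
    (hM : M = (((T : ℂ) ^ 2)⁻¹ • ∑ s, ∑ t ∈ Finset.univ \ {s}, Cst q s t) -
        (((T : ℂ) - 1) / (T : ℂ)) • (1 : Matrix (Fin T → Fin d) (Fin T → Fin d) ℂ)) :
    |((tensorState ρ * M).trace).re - μ| ≤
      Real.sqrt ((d : ℝ) / (γ * (T : ℝ))) * Real.sqrt μ + ((d : ℝ) - 1) / (T : ℝ) := by
  have hq0 : ∀ i, 0 < q i := fun i => lt_of_lt_of_le hγ (hq i)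
  have hT0 : (0:ℝ) < (T:ℝ) := by
    have : (1:ℝ) ≤ (T:ℝ) := by exact_mod_cast hT
    linarith
  have hT1 : (1:ℝ) ≤ (T:ℝ) := by exact_mod_cast hT
  set z : Fin d → Fin d → ℂ := fun i j => ∑ s, ρ s i j with hz
  set N : Fin T → ℝ := fun s => ∑ i, ∑ j, (2/(q i + q j)) * Complex.normSq (ρ s i j) with hN
  set SF : ℝ := ∑ i, ∑ j, (2/(q i + q j)) * Complex.normSq (z i j) with hSF
  set c : Fin T → Fin T → ℂ :=
    fun s t => ∑ i, ∑ j, ((2/(q i + q j):ℝ):ℂ) * (ρ s i j * ρ t j i) with hc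
  have htr1 : ∀ r, (ρ r).trace = 1 := fun r => (hρ r).2
  have hzconj : ∀ i j, (∑ t, ρ t j i) = starRingEnd ℂ (z i j) := by
    intro i j
    rw [hz, map_sum]
    exact Finset.sum_congr rfl fun t _ => herm_conj (hρ t).1.1 i j
  -- sums of c
  have hct : ∀ s, (∑ t, c s t)
      = ∑ i, ∑ j, ((2/(q i + q j):ℝ):ℂ) * (ρ s i j * starRingEnd ℂ (z i j)) := by
    intro s
    rw [hc]
    rw [Finset.sum_comm]
    refine Finset.sum_congr rfl fun i _ => ?_
    rw [Finset.sum_comm]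
    refine Finset.sum_congr rfl fun j _ => ?_
    rw [← Finset.mul_sum, ← Finset.mul_sum, hzconj]
  have hfull : (∑ s, ∑ t, c s t) = (SF : ℂ) := by
    rw [Finset.sum_congr rfl fun s _ => hct s, Finset.sum_comm]
    rw [hSF]
    push_cast
    refine Finset.sum_congr rfl fun i _ => ?_
    rw [Finset.sum_comm]
    refine Finset.sum_congr rfl fun j _ => ?_
    rw [← Finset.mul_sum, ← Finset.sum_mul]
    have hzz : (∑ s : Fin T, ρ s i j) = z i j := rfl
    rw [hzz, Complex.mul_conj]
  have hdiagc : ∀ s, c s s = (N s : ℂ) := by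
    intro s
    rw [hc, hN]
    push_cast
    refine Finset.sum_congr rfl fun i _ => Finset.sum_congr rfl fun j _ => ?_
    rw [herm_conj (hρ s).1.1 i j, Complex.mul_conj]
  have hCsum : (∑ s, ∑ t ∈ Finset.univ \ {s}, (tensorState ρ * Cst q s t).trace)
      = (SF:ℂ) - ∑ s, (N s:ℂ) := by
    have hper : ∀ s : Fin T, (∑ t ∈ Finset.univ \ {s}, (tensorState ρ * Cst q s t).trace)
        = (∑ t, c s t) - c s s := by
      intro s
      rw [Finset.sdiff_singleton_eq_erase]
      rw [Finset.sum_congr rfl fun t ht =>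
        trace_tensor_Cst q ρ htr1 (Ne.symm (Finset.ne_of_mem_erase ht))]
      exact Finset.sum_erase_eq_sub (Finset.mem_univ s)
    rw [Finset.sum_congr rfl fun s _ => hper s, Finset.sum_sub_distrib, hfull,
      Finset.sum_congr rfl fun s _ => hdiagc s]
  have hϱ1 : (tensorState ρ).trace = 1 := by
    rw [trace_tensor]
    simp [htr1]
  have htrace_full : (tensorState ρ * M).trace
      = ((((T:ℝ)^2)⁻¹ * (SF - ∑ s, N s) - ((T:ℝ)-1)/(T:ℝ) : ℝ) : ℂ) := by
    rw [hM, Matrix.mul_sub, Matrix.trace_sub, Matrix.mul_smul, Matrix.trace_smul,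
      Matrix.mul_smul, Matrix.trace_smul, Matrix.mul_one, hϱ1]
    have hms : tensorState ρ * (∑ s, ∑ t ∈ Finset.univ \ {s}, Cst q s t)
        = ∑ s, ∑ t ∈ Finset.univ \ {s}, tensorState ρ * Cst q s t := by
      rw [Matrix.mul_sum]
      exact Finset.sum_congr rfl fun s _ => Matrix.mul_sum _ _ _
    rw [hms, Matrix.trace_sum, Finset.sum_congr rfl fun s _ => Matrix.trace_sum _ _, hCsum]
    rw [smul_eq_mul, smul_eq_mul, mul_one]
    push_cast
    ring
  have hre : ((tensorState ρ * M).trace).re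
      = ((T:ℝ)^2)⁻¹ * (SF - ∑ s, N s) - ((T:ℝ)-1)/(T:ℝ) := by
    rw [htrace_full, Complex.ofReal_re]
  -- μ in terms of SF
  have havg : ∀ i j, ‖avgState ρ i j‖ ^ 2
      = ((T:ℝ)⁻¹)^2 * Complex.normSq (z i j) := by
    intro i j
    have h1 : avgState ρ i j = (((T:ℝ)⁻¹ : ℝ) : ℂ) * z i j := by
      rw [avgState, Matrix.smul_apply, Matrix.sum_apply, smul_eq_mul]
      have hzz : (∑ s : Fin T, ρ s i j) = z i j := rfl
      rw [hzz]
      push_cast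
      ring
    rw [h1, norm_mul, mul_pow]
    congr 1
    · rw [Complex.sq_norm, Complex.normSq_ofReal]
      ring
    · exact Complex.sq_norm _
  have hμSF : μ = ((T:ℝ)^2)⁻¹ * SF - 1 := by
    rw [hμ, DBchi]
    have h2 : ∑ i, ∑ j, (2/(q i + q j)) * ‖avgState ρ i j‖ ^ 2
        = ((T:ℝ)^2)⁻¹ * SF := by
      rw [hSF, Finset.mul_sum]
      refine Finset.sum_congr rfl fun i _ => ?_
      rw [Finset.mul_sum]
      refine Finset.sum_congr rfl fun j _ => ?_
      rw [havg i j, ← inv_pow]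
      ring
    rw [h2]
  -- the bias as a nonnegative quantity
  set E : ℝ := (∑ s, N s) - (T:ℝ) with hE
  have hdelta : ((tensorState ρ * M).trace).re - μ = -(E / (T:ℝ)^2) := by
    rw [hre, hμSF, hE]
    field_simp
    ring
  have hNs : ∀ s, 1 ≤ N s ∧ N s ≤ ∑ i, (ρ s i i).re / q i :=
    fun s => Nself_bounds hq0 hq1 (hρ s).1 (hρ s).2
  have hE0 : 0 ≤ E := by
    rw [hE]
    have h1 : (∑ s : Fin T, (1:ℝ)) ≤ ∑ s, N s := Finset.sum_le_sum fun s _ => (hNs s).1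
    simp only [Finset.sum_const, Finset.card_univ, Fintype.card_fin, nsmul_eq_mul, mul_one] at h1
    linarith
  have habs : |((tensorState ρ * M).trace).re - μ| = E / (T:ℝ)^2 := by
    rw [hdelta, abs_neg, abs_of_nonneg (div_nonneg hE0 (sq_nonneg _))]
  -- averaged diagonal
  set pb : Fin d → ℝ := fun i => (∑ s, (ρ s i i).re) / (T:ℝ) with hpb
  have hpb0 : ∀ i, 0 ≤ pb i :=
    fun i => div_nonneg (Finset.sum_nonneg fun s _ => (psd_diag (hρ s).1 i).1) hT0.le
  have hpbsum : ∑ i, pb i = 1 := by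
    rw [hpb, ← Finset.sum_div]
    rw [Finset.sum_comm, Finset.sum_congr rfl fun s _ => trace_re_sum (htr1 s)]
    simp only [Finset.sum_const, Finset.card_univ, Fintype.card_fin, nsmul_eq_mul, mul_one]
    exact div_self hT0.ne'
  have hpbre : ∀ i, (avgState ρ i i).re = pb i := by
    intro i
    have h1 : avgState ρ i i = (((T:ℝ)⁻¹ : ℝ) : ℂ) * ∑ s, ρ s i i := by
      rw [avgState, Matrix.smul_apply, Matrix.sum_apply, smul_eq_mul]
      push_cast
      ring
    rw [h1]
    simp only [Complex.mul_re, Complex.ofReal_re, Complex.ofReal_im, zero_mul, sub_zero]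
    rw [Complex.re_sum, hpb]
    field_simp
  -- μ dominates the diagonal χ²
  have hμ_eps : ∑ i, (pb i - q i)^2 / q i ≤ μ := by
    have hlow : ∑ i, (pb i)^2 / q i - 1 ≤ μ := by
      rw [hμ, DBchi]
      have h1 : ∑ i, (pb i)^2 / q i
          ≤ ∑ i, ∑ j, (2/(q i + q j)) * ‖avgState ρ i j‖ ^ 2 := by
        refine Finset.sum_le_sum fun i _ => ?_
        have hnn : ∀ j ∈ Finset.univ,
            0 ≤ (2/(q i + q j)) * ‖avgState ρ i j‖ ^ 2 := by
          intro j _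
          have h3 : (0:ℝ) < q i + q j := by linarith [hq0 i, hq0 j]
          exact mul_nonneg (div_nonneg (by norm_num) h3.le) (by positivity)
        refine le_trans ?_ (Finset.single_le_sum hnn (Finset.mem_univ i))
        have h4 : (pb i)^2 ≤ ‖avgState ρ i i‖ ^ 2 := by
          have h5 : (pb i)^2 = ((avgState ρ i i).re)^2 := by rw [hpbre]
          rw [h5, Complex.sq_norm, Complex.normSq_apply]
          nlinarith [sq_nonneg (avgState ρ i i).im]
        calc (pb i)^2 / q i ≤ ‖avgState ρ i i‖ ^ 2 / q i := by
              exact (div_le_div_iff_of_pos_right (hq0 i)).mpr h4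
          _ = (2/(q i + q i)) * ‖avgState ρ i i‖ ^ 2 := by
              field_simp [(hq0 i).ne']
              try ring
      linarith
    have hexp : ∑ i, (pb i - q i)^2 / q i = ∑ i, (pb i)^2 / q i - 1 := by
      have h6 : ∀ i ∈ Finset.univ, (pb i - q i)^2 / q i = (pb i)^2/q i - 2 * pb i + q i := by
        intro i _
        field_simp [(hq0 i).ne']
        ring
      rw [Finset.sum_congr rfl h6]
      rw [Finset.sum_add_distrib, Finset.sum_sub_distrib, ← Finset.mul_sum, hpbsum, hq1]
      ring
    linarith
  have hμ0 : 0 ≤ μ :=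
    le_trans (Finset.sum_nonneg fun i _ => div_nonneg (sq_nonneg _) (hq0 i).le) hμ_eps
  -- Cauchy–Schwarz for the linear term
  have hcs2 : ∑ i, (pb i - q i)/q i ≤ Real.sqrt ((d:ℝ)/γ) * Real.sqrt μ := by
    have h1 : (∑ i, (pb i - q i)/q i)^2
        ≤ (∑ i, (pb i - q i)^2/q i) * (∑ i, 1/q i) := by
      have hcs := Finset.sum_mul_sq_le_sq_mul_sq Finset.univ
        (fun i => (pb i - q i)/Real.sqrt (q i)) (fun i => 1/Real.sqrt (q i))
      have e1 : ∀ i, (pb i - q i)/Real.sqrt (q i) * (1/Real.sqrt (q i)) = (pb i - q i)/q i := by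
        intro i
        rw [div_mul_div_comm, mul_one, Real.mul_self_sqrt (hq0 i).le]
      have e2 : ∀ i, ((pb i - q i)/Real.sqrt (q i))^2 = (pb i - q i)^2/q i := by
        intro i; rw [div_pow, Real.sq_sqrt (hq0 i).le]
      have e3 : ∀ i, (1/Real.sqrt (q i))^2 = 1/q i := by
        intro i; rw [div_pow, Real.sq_sqrt (hq0 i).le, one_pow]
      rw [Finset.sum_congr rfl fun i _ => (e1 i).symm,
        ← Finset.sum_congr rfl fun i _ => e2 i, ← Finset.sum_congr rfl fun i _ => e3 i]
      exact hcs
    have h2 : (∑ i, 1/q i) ≤ (d:ℝ)/γ := by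
      calc (∑ i, 1/q i) ≤ ∑ _i : Fin d, 1/γ :=
            Finset.sum_le_sum fun i _ => one_div_le_one_div_of_le hγ (hq i)
        _ = (d:ℝ)/γ := by
            simp only [Finset.sum_const, Finset.card_univ, Fintype.card_fin, nsmul_eq_mul]
            ring
    have h3 : (∑ i, (pb i - q i)/q i)^2 ≤ μ * ((d:ℝ)/γ) := by
      refine le_trans h1 (mul_le_mul hμ_eps h2 ?_ hμ0)
      exact Finset.sum_nonneg fun i _ => div_nonneg (by norm_num) (hq0 i).le
    calc ∑ i, (pb i - q i)/q i ≤ |∑ i, (pb i - q i)/q i| := le_abs_self _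
      _ = Real.sqrt ((∑ i, (pb i - q i)/q i)^2) := (Real.sqrt_sq_eq_abs _).symm
      _ ≤ Real.sqrt (μ * ((d:ℝ)/γ)) := Real.sqrt_le_sqrt h3
      _ = Real.sqrt ((d:ℝ)/γ) * Real.sqrt μ := by
          rw [Real.sqrt_mul hμ0, mul_comm]
  -- upper bound on E
  have hEub : E ≤ (T:ℝ) * (Real.sqrt ((d:ℝ)/γ) * Real.sqrt μ + ((d:ℝ) - 1)) := by
    have h1 : ∑ s, N s ≤ ∑ s, ∑ i, (ρ s i i).re / q i :=
      Finset.sum_le_sum fun s _ => (hNs s).2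
    have h2 : ∑ s, ∑ i, (ρ s i i).re / q i
        = (T:ℝ) * (∑ i, (pb i - q i)/q i) + (T:ℝ) * (d:ℝ) := by
      rw [Finset.sum_comm]
      have h3 : ∀ i ∈ Finset.univ, (∑ s, (ρ s i i).re / q i)
          = (T:ℝ) * ((pb i - q i)/q i) + (T:ℝ) * 1 := by
        intro i _
        rw [← Finset.sum_div]
        have h4 : (∑ s, (ρ s i i).re) = (T:ℝ) * pb i := by
          rw [hpb]
          field_simp
        rw [h4]
        field_simp [(hq0 i).ne']
        try ring
      rw [Finset.sum_congr rfl h3, Finset.sum_add_distrib, ← Finset.mul_sum, ← Finset.mul_sum]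
      simp only [Finset.sum_const, Finset.card_univ, Fintype.card_fin, nsmul_eq_mul, mul_one]
      try ring
    have h5 : (T:ℝ) * (∑ i, (pb i - q i)/q i)
        ≤ (T:ℝ) * (Real.sqrt ((d:ℝ)/γ) * Real.sqrt μ) :=
      mul_le_mul_of_nonneg_left hcs2 hT0.le
    rw [hE]
    calc (∑ s, N s) - (T:ℝ) ≤ ((T:ℝ) * (∑ i, (pb i - q i)/q i) + (T:ℝ) * (d:ℝ)) - (T:ℝ) := by
          rw [← h2]; linarith
      _ ≤ (T:ℝ) * (Real.sqrt ((d:ℝ)/γ) * Real.sqrt μ) + (T:ℝ) * (d:ℝ) - (T:ℝ) := by linarith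
      _ = (T:ℝ) * (Real.sqrt ((d:ℝ)/γ) * Real.sqrt μ + ((d:ℝ) - 1)) := by ring
  -- finish
  rw [habs]
  have hstep : E / (T:ℝ)^2
      ≤ (Real.sqrt ((d:ℝ)/γ) / (T:ℝ)) * Real.sqrt μ + ((d:ℝ) - 1) / (T:ℝ) := by
    calc E / (T:ℝ)^2
        ≤ ((T:ℝ) * (Real.sqrt ((d:ℝ)/γ) * Real.sqrt μ + ((d:ℝ) - 1))) / (T:ℝ)^2 := by
          exact (div_le_div_iff_of_pos_right (by positivity)).mpr hEub
      _ = (Real.sqrt ((d:ℝ)/γ) / (T:ℝ)) * Real.sqrt μ + ((d:ℝ) - 1) / (T:ℝ) := by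
          field_simp
  refine le_trans hstep ?_
  have hsq : Real.sqrt ((d:ℝ)/γ) / (T:ℝ) ≤ Real.sqrt ((d:ℝ)/(γ * (T:ℝ))) := by
    have e1 : Real.sqrt ((d:ℝ)/(γ * (T:ℝ)^2)) = Real.sqrt ((d:ℝ)/γ) / (T:ℝ) := by
      rw [show (d:ℝ)/(γ * (T:ℝ)^2) = ((d:ℝ)/γ)/(T:ℝ)^2 by ring,
        Real.sqrt_div (by positivity) ((T:ℝ)^2), Real.sqrt_sq hT0.le]
    rw [← e1]
    apply Real.sqrt_le_sqrt
    apply div_le_div_of_nonneg_left (by positivity) (by positivity)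
    have h8 : γ * (T:ℝ) * 1 ≤ γ * (T:ℝ) * (T:ℝ) :=
      mul_le_mul_of_nonneg_left hT1 (by positivity)
    calc γ * (T:ℝ) = γ * (T:ℝ) * 1 := by ring
      _ ≤ γ * (T:ℝ) * (T:ℝ) := h8
      _ = γ * (T:ℝ)^2 := by ring
  have := mul_le_mul_of_nonneg_right hsq (Real.sqrt_nonneg μ)
  linarith
end
end

section
/- Let q be a probability vector on Fin d with q i ≥ γ > 0 for all i, let σ = diag(q), let ρ be a d-dimensional quantum state, and set Δ := ρ − σ and μ := D²_{Bχ}(ρ‖σ). Working on the triple tensor space indexed by (Fin 3 → Fin d), with C_{12} the C-observable applied to factors 1,2 and C_{13} the C-observable applied to factors 1,3, the following hold: (i) Re(Tr[(σ⊗Δ⊗Δ)·C_{12}·C_{13}]) ≤ 2μ; (ii) Re(Tr[(Δ⊗Δ⊗Δ)·C_{12}·C_{13}]) ≤ √(d/γ)·μ^{3/2}; (iii) Re(Tr[(ρ⊗ρ)·C²]) ≤ 2d² + (2d/γ)·μ, where C is the C-observable on Fin d × Fin d; and (iv) Re(Tr[(ρ⊗ρ⊗ρ)·C_{12}·C_{13}])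 ≤ 1 + 4μ + √(d/γ)·μ^{3/2}. -/
open scoped BigOperators ComplexOrder

noncomputable section

/-- The observable `C` on `ℂ^d ⊗ ℂ^d`. -/
def Cobs {d : ℕ} (q : Fin d → ℝ) : Matrix (Fin d × Fin d) (Fin d × Fin d) ℂ :=
  fun x y => if x.1 = y.2 ∧ x.2 = y.1 then ((2 / (q x.1 + q x.2) : ℝ) : ℂ) else 0

/-- Tensor product of two `d × d` matrices, on `Fin d × Fin d`. -/
def tensor2 {d : ℕ} (R S : Matrix (Fin d) (Fin d) ℂ) :
    Matrix (Fin d × Fin d) (Fin d × Fin d) ℂ :=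
  fun x y => R x.1 y.1 * S x.2 y.2

/-- Tensor product of three `d × d` matrices, on `Fin 3 → Fin d`. -/
def tensor3 {d : ℕ} (R S U : Matrix (Fin d) (Fin d) ℂ) :
    Matrix (Fin 3 → Fin d) (Fin 3 → Fin d) ℂ :=
  fun a b => R (a 0) (b 0) * S (a 1) (b 1) * U (a 2) (b 2)

/-! ### Auxiliary lemmas -/

lemma cst01_apply {d : ℕ} (q : Fin d → ℝ) (b c : Fin 3 → Fin d) :
    Cst q 0 1 b c = if c = ![b 1, b 0, b 2] then ((2 / (q (b 0) + q (b 1)) : ℝ) : ℂ) else 0 := by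
  unfold Cst
  refine if_congr ?_ rfl rfl
  constructor
  · rintro ⟨h1, h2, h3⟩
    funext r
    fin_cases r
    · simpa using h1
    · simpa using h2
    · simpa using (h3 2 (by decide) (by decide)).symm
  · rintro rfl
    refine ⟨by simp, by simp, ?_⟩
    intro r h0 h1
    fin_cases r
    · exact absurd rfl h0
    · exact absurd rfl h1
    · simp

lemma cst02_apply {d : ℕ} (q : Fin d → ℝ) (b c : Fin 3 → Fin d) :
    Cst q 0 2 b c = if c = ![b 2, b 1, b 0] then ((2 / (q (b 0) + q (b 2)) : ℝ) : ℂ) else 0 := by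
  unfold Cst
  refine if_congr ?_ rfl rfl
  constructor
  · rintro ⟨h1, h2, h3⟩
    funext r
    fin_cases r
    · simpa using h1
    · simpa using (h3 1 (by decide) (by decide)).symm
    · simpa using h2
  · rintro rfl
    refine ⟨by simp, by simp, ?_⟩
    intro r h0 h1
    fin_cases r
    · exact absurd rfl h0
    · simp
    · exact absurd rfl h1

def e3 (d : ℕ) : (Fin d × Fin d × Fin d) ≃ (Fin 3 → Fin d) where
  toFun p := ![p.1, p.2.1, p.2.2]
  invFun f := (f 0, f 1, f 2)
  left_inv p := rfl
  right_inv f := by funext r; fin_cases r <;> rfl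

lemma sum_fun3 {d : ℕ} {M : Type*} [AddCommMonoid M] (F : Fin d → Fin d → Fin d → M) :
    ∑ b : Fin 3 → Fin d, F (b 0) (b 1) (b 2) = ∑ x, ∑ y, ∑ z, F x y z := by
  rw [← Equiv.sum_comp (e3 d) (fun b => F (b 0) (b 1) (b 2))]
  rw [Fintype.sum_prod_type]
  refine Finset.sum_congr rfl fun x _ => ?_
  rw [Fintype.sum_prod_type]
  rfl

lemma trace3_formula {d : ℕ} (q : Fin d → ℝ) (R S U : Matrix (Fin d) (Fin d) ℂ) :
    (tensor3 R S U * (Cst q 0 1 * Cst q 0 2)).trace =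
      ∑ x, ∑ y, ∑ z, ((2 / (q x + q y) * (2 / (q y + q z)) : ℝ) : ℂ) *
        (R z x * S x y * U y z) := by
  have h1 : ∀ b a : Fin 3 → Fin d, (∑ c, Cst q 0 1 b c * Cst q 0 2 c a) =
      if a = ![b 2, b 0, b 1]
      then ((2 / (q (b 0) + q (b 1)) * (2 / (q (b 1) + q (b 2))) : ℝ) : ℂ) else 0 := by
    intro b a
    simp only [cst01_apply, cst02_apply, ite_mul, zero_mul, Finset.sum_ite_eq',
      Finset.mem_univ, if_true]
    simp only [Matrix.cons_val_zero, Matrix.cons_val_one, Matrix.head_cons,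
      Matrix.cons_val_two, Matrix.tail_cons, mul_ite, mul_zero]
    push_cast
    rfl
  simp only [Matrix.trace, Matrix.diag, Matrix.mul_apply, h1]
  rw [Finset.sum_comm]
  simp only [mul_ite, mul_zero, Finset.sum_ite_eq', Finset.mem_univ, if_true]
  rw [show (fun b : Fin 3 → Fin d => tensor3 R S U ![b 2, b 0, b 1] b *
      ((2 / (q (b 0) + q (b 1)) * (2 / (q (b 1) + q (b 2))) : ℝ) : ℂ)) = fun b =>
      ((2 / (q (b 0) + q (b 1)) * (2 / (q (b 1) + q (b 2))) : ℝ) : ℂ) *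
      (R (b 2) (b 0) * S (b 0) (b 1) * U (b 1) (b 2)) from ?_]
  · exact sum_fun3 (fun x y z => ((2 / (q x + q y) * (2 / (q y + q z)) : ℝ) : ℂ) *
      (R z x * S x y * U y z))
  · funext b
    simp only [tensor3, Matrix.cons_val_zero, Matrix.cons_val_one, Matrix.head_cons,
      Matrix.cons_val_two, Matrix.tail_cons]
    ring

lemma cobs_apply {d : ℕ} (q : Fin d → ℝ) (x y : Fin d × Fin d) :
    Cobs q x y = if y = (x.2, x.1) then ((2 / (q x.1 + q x.2) : ℝ) : ℂ) else 0 := by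
  unfold Cobs
  refine if_congr ?_ rfl rfl
  constructor
  · rintro ⟨h1, h2⟩; exact Prod.ext h2.symm h1.symm
  · rintro rfl; exact ⟨rfl, rfl⟩

lemma trace2_formula {d : ℕ} (q : Fin d → ℝ) (R S : Matrix (Fin d) (Fin d) ℂ) :
    (tensor2 R S * (Cobs q * Cobs q)).trace =
      ∑ a, ∑ b, ((2 / (q a + q b) * (2 / (q a + q b)) : ℝ) : ℂ) * (R a a * S b b) := by
  have h1 : ∀ y x : Fin d × Fin d, (∑ z, Cobs q y z * Cobs q z x) =
      if x = y then ((2 / (q y.1 + q y.2) * (2 / (q y.1 + q y.2)) : ℝ) : ℂ) else 0 := by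
    intro y x
    rw [show (∑ z, Cobs q y z * Cobs q z x) = ∑ z : Fin d × Fin d,
        (if z = (y.2, y.1) then ((2 / (q y.1 + q y.2) : ℝ) : ℂ) * Cobs q z x else 0) from
      Finset.sum_congr rfl fun z _ => by rw [cobs_apply q y z, ite_mul, zero_mul]]
    rw [Finset.sum_ite_eq' Finset.univ ((y.2, y.1)) _]
    simp only [Finset.mem_univ, if_true]
    rw [cobs_apply]
    rw [show (((y.2, y.1).2 : Fin d), ((y.2, y.1).1 : Fin d)) = y from rfl]
    rw [show q (y.2, y.1).1 + q (y.2, y.1).2 = q y.1 + q y.2 from add_comm _ _]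
    push_cast
    rw [mul_ite, mul_zero]
  simp only [Matrix.trace, Matrix.diag, Matrix.mul_apply, h1]
  rw [Finset.sum_comm]
  simp only [mul_ite, mul_zero, Finset.sum_ite_eq', Finset.mem_univ, if_true]
  rw [Fintype.sum_prod_type]
  refine Finset.sum_congr rfl fun a _ => Finset.sum_congr rfl fun b _ => ?_
  simp only [tensor2]
  ring

section Gcollapse
variable {d : ℕ} (q : Fin d → ℝ) (w : Fin d → ℂ) (R S U : Matrix (Fin d) (Fin d) ℂ)

lemma G_left :
    (∑ x, ∑ y, ∑ z, ((2 / (q x + q y) * (2 / (q y + q z)) : ℝ) : ℂ) *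
        (Matrix.diagonal w z x * S x y * U y z)) =
    ∑ x, ∑ y, ((2 / (q x + q y) * (2 / (q y + q x)) : ℝ) : ℂ) * (w x * S x y * U y x) := by
  refine Finset.sum_congr rfl fun x _ => Finset.sum_congr rfl fun y _ => ?_
  simp only [Matrix.diagonal_apply, ite_mul, mul_ite, mul_zero, zero_mul,
    Finset.sum_ite_eq', Finset.mem_univ, if_true]

lemma G_mid :
    (∑ x, ∑ y, ∑ z, ((2 / (q x + q y) * (2 / (q y + q z)) : ℝ) : ℂ) *
        (R z x * Matrix.diagonal w x y * U y z)) =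
    ∑ x, ∑ z, ((2 / (q x + q x) * (2 / (q x + q z)) : ℝ) : ℂ) * (R z x * w x * U x z) := by
  refine Finset.sum_congr rfl fun x _ => ?_
  rw [Finset.sum_comm]
  refine Finset.sum_congr rfl fun z _ => ?_
  simp only [Matrix.diagonal_apply, ite_mul, mul_ite, mul_zero, zero_mul,
    Finset.sum_ite_eq, Finset.mem_univ, if_true]

lemma G_right :
    (∑ x, ∑ y, ∑ z, ((2 / (q x + q y) * (2 / (q y + q z)) : ℝ) : ℂ) *
        (R z x * S x y * Matrix.diagonal w y z)) =
    ∑ x, ∑ y, ((2 / (q x + q y) * (2 / (q y + q y)) : ℝ) : ℂ) * (R y x * S x y * w y) := by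
  refine Finset.sum_congr rfl fun x _ => Finset.sum_congr rfl fun y _ => ?_
  simp only [Matrix.diagonal_apply, ite_mul, mul_ite, mul_zero, zero_mul,
    Finset.sum_ite_eq, Finset.mem_univ, if_true]

end Gcollapse

lemma K_eq {d : ℕ} (q : Fin d → ℝ) (hq0 : ∀ i, 0 < q i) (hq1 : (∑ i, q i) = 1)
    (ρ : Matrix (Fin d) (Fin d) ℂ) (hρ : IsState ρ) :
    (∑ i, ∑ j, 2 / (q i + q j) *
        ‖(ρ - Matrix.diagonal fun k => ((q k : ℝ) : ℂ)) i j‖ ^ 2) = DBchi q ρ := by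
  have hherm : ρ.IsHermitian := hρ.1.1
  have htr : (∑ i, (ρ i i).re) = 1 := by
    have h2 := congrArg Complex.re hρ.2
    rw [Matrix.trace] at h2
    simpa [Complex.re_sum, Matrix.diag] using h2
  have hterm : ∀ i j, 2 / (q i + q j) *
        ‖(ρ - Matrix.diagonal fun k => ((q k : ℝ) : ℂ)) i j‖ ^ 2
      = 2 / (q i + q j) * ‖ρ i j‖ ^ 2
        - (if i = j then 2 * (ρ i i).re - q i else 0) := by
    intro i j
    by_cases h : i = j
    · subst h
      obtain ⟨t, ht⟩ : ∃ t : ℝ, ρ i i = ((t : ℝ) : ℂ) :=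
        ⟨(ρ i i).re, (hherm.coe_re_apply_self i).symm⟩
      simp only [Matrix.sub_apply, Matrix.diagonal_apply_eq, if_pos rfl, ht,
        Complex.ofReal_re]
      rw [← Complex.ofReal_sub, Complex.norm_real, Real.norm_eq_abs, Complex.norm_real, Real.norm_eq_abs, sq_abs, sq_abs]
      have hqi : q i + q i ≠ 0 := ne_of_gt (add_pos (hq0 i) (hq0 i))
      have hqi0 : q i ≠ 0 := (hq0 i).ne'
      field_simp
      simp only [↓reduceIte]
      ring
    · simp only [Matrix.sub_apply, Matrix.diagonal_apply_ne _ h, if_neg h, sub_zero]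
  simp only [hterm]
  simp only [Finset.sum_sub_distrib, Finset.sum_ite_eq, Finset.mem_univ, if_true]
  rw [← Finset.mul_sum, htr, hq1]
  unfold DBchi
  ring

lemma CS_bound {d : ℕ} (γ : ℝ) (hγ : 0 < γ) (q : Fin d → ℝ) (hq : ∀ i, γ ≤ q i)
    (r : Fin d → Fin d → ℝ) (hr0 : ∀ i j, 0 ≤ r i j) (hrs : ∀ i j, r j i = r i j) :
    ∑ x, ∑ y, ∑ z, 2 / (q x + q y) * (2 / (q y + q z)) * (r z x * r x y * r y z) ≤
      Real.sqrt ((d : ℝ) / γ) * (∑ i, ∑ j, 2 / (q i + q j) * r i j ^ 2) ^ ((3 : ℝ) / 2) := by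
  have hq0 : ∀ i, 0 < q i := fun i => lt_of_lt_of_le hγ (hq i)
  have hs0 : ∀ i j, 0 < q i + q j := fun i j => add_pos (hq0 i) (hq0 j)
  have hc0 : ∀ i j, 0 < 2 / (q i + q j) := fun i j => div_pos two_pos (hs0 i j)
  set K : ℝ := ∑ i, ∑ j, 2 / (q i + q j) * r i j ^ 2 with hK
  have hK0 : 0 ≤ K := Finset.sum_nonneg fun i _ => Finset.sum_nonneg fun j _ =>
    mul_nonneg (le_of_lt (hc0 i j)) (sq_nonneg _)
  set A : Fin d → ℝ := fun y => ∑ x, 2 / (q x + q y) * r x y ^ 2 with hA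
  have hA0 : ∀ y, 0 ≤ A y := fun y => Finset.sum_nonneg fun x _ =>
    mul_nonneg (le_of_lt (hc0 x y)) (sq_nonneg _)
  have hAsum : (∑ y, A y) = K := by rw [hK, Finset.sum_comm]
  have hAK : ∀ y, A y ≤ K := by
    intro y
    rw [← hAsum]
    exact Finset.single_le_sum (fun i _ => hA0 i) (Finset.mem_univ y)
  set f : Fin d × Fin d × Fin d → ℝ := fun p =>
    Real.sqrt (2 / (q p.1 + q p.2.1) * (2 / (q p.2.1 + q p.2.2))) * (r p.1 p.2.1 * r p.2.1 p.2.2)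
  set g : Fin d × Fin d × Fin d → ℝ := fun p =>
    Real.sqrt (2 / (q p.1 + q p.2.1) * (2 / (q p.2.1 + q p.2.2))) * r p.2.2 p.1
  have hfg : (∑ p, f p * g p) =
      ∑ x, ∑ y, ∑ z, 2 / (q x + q y) * (2 / (q y + q z)) * (r z x * r x y * r y z) := by
    rw [Fintype.sum_prod_type]
    refine Finset.sum_congr rfl fun x _ => ?_
    rw [Fintype.sum_prod_type]
    refine Finset.sum_congr rfl fun y _ => Finset.sum_congr rfl fun z _ => ?_
    simp only [f, g]
    rw [show Real.sqrt (2 / (q x + q y) * (2 / (q y + q z))) * (r x y * r y z) *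
        (Real.sqrt (2 / (q x + q y) * (2 / (q y + q z))) * r z x) =
        Real.sqrt (2 / (q x + q y) * (2 / (q y + q z))) *
          Real.sqrt (2 / (q x + q y) * (2 / (q y + q z))) * (r z x * r x y * r y z) from by ring]
    rw [Real.mul_self_sqrt (le_of_lt (mul_pos (hc0 x y) (hc0 y z)))]
  have hf2 : (∑ p, f p ^ 2) ≤ K ^ 2 := by
    have e0 : (∑ p, f p ^ 2) = ∑ x, ∑ y, ∑ z, f (x, y, z) ^ 2 := by
      rw [Fintype.sum_prod_type]
      exact Finset.sum_congr rfl fun x _ => Fintype.sum_prod_type _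
    have e1 : (∑ p, f p ^ 2) = ∑ y, A y * A y := by
      rw [e0, Finset.sum_comm]
      refine Finset.sum_congr rfl fun y _ => ?_
      have e2 : ∀ x : Fin d, (∑ z, f (x, y, z) ^ 2) =
          (2 / (q x + q y) * r x y ^ 2) * ∑ z, 2 / (q y + q z) * r y z ^ 2 := by
        intro x
        rw [Finset.mul_sum]
        refine Finset.sum_congr rfl fun z _ => ?_
        simp only [f]
        rw [mul_pow, Real.sq_sqrt (le_of_lt (mul_pos (hc0 x y) (hc0 y z)))]
        ring
      simp only [e2]
      rw [← Finset.sum_mul]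
      have e3 : (∑ z, 2 / (q y + q z) * r y z ^ 2) = A y := by
        refine Finset.sum_congr rfl fun z _ => ?_
        rw [add_comm (q y) (q z), hrs]
      rw [e3]
    rw [e1, pow_two]
    calc (∑ y, A y * A y) ≤ ∑ y, A y * K :=
          Finset.sum_le_sum fun y _ => mul_le_mul_of_nonneg_left (hAK y) (hA0 y)
      _ = K * K := by rw [← Finset.sum_mul, hAsum]
  have hchain : ∀ x y z : Fin d, 2 / (q x + q y) * (2 / (q y + q z)) ≤
      1 / γ * (2 / (q x + q z)) := by
    intro x y z
    rw [div_mul_div_comm, div_mul_div_comm,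
      div_le_div_iff₀ (mul_pos (hs0 x y) (hs0 y z)) (mul_pos hγ (hs0 x z))]
    nlinarith [mul_nonneg (sub_nonneg.2 (hq x)) (sub_nonneg.2 (hq z)),
      mul_nonneg (sub_nonneg.2 (hq y)) (le_of_lt (hs0 x z)),
      mul_nonneg (sub_nonneg.2 (hq y)) (show (0:ℝ) ≤ q y + γ by nlinarith [hq y]),
      hq y, hq x, hq z, hs0 x z, hγ]
  have hg2 : (∑ p, g p ^ 2) ≤ (d : ℝ) / γ * K := by
    have e1 : ∀ p : Fin d × Fin d × Fin d, g p ^ 2 =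
        2 / (q p.1 + q p.2.1) * (2 / (q p.2.1 + q p.2.2)) * r p.2.2 p.1 ^ 2 := by
      intro p
      simp only [g]
      rw [mul_pow, Real.sq_sqrt (le_of_lt (mul_pos (hc0 p.1 p.2.1) (hc0 p.2.1 p.2.2)))]
    calc (∑ p, g p ^ 2)
        = ∑ x, ∑ y, ∑ z, 2 / (q x + q y) * (2 / (q y + q z)) * r z x ^ 2 := by
          rw [Fintype.sum_prod_type]
          refine Finset.sum_congr rfl fun x _ => ?_
          rw [Fintype.sum_prod_type]
          exact Finset.sum_congr rfl fun y _ => Finset.sum_congr rfl fun z _ => e1 _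
      _ ≤ ∑ x, ∑ y, ∑ z, 1 / γ * (2 / (q x + q z) * r x z ^ 2) := by
          refine Finset.sum_le_sum fun x _ => Finset.sum_le_sum fun y _ =>
            Finset.sum_le_sum fun z _ => ?_
          rw [hrs z x, ← mul_assoc]
          exact mul_le_mul_of_nonneg_right (hchain x y z) (sq_nonneg _)
      _ = (d : ℝ) / γ * K := by
          rw [hK, Finset.mul_sum]
          refine Finset.sum_congr rfl fun x _ => ?_
          rw [Finset.sum_const, Finset.card_univ, Fintype.card_fin, nsmul_eq_mul,
            Finset.mul_sum, Finset.mul_sum]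
          refine Finset.sum_congr rfl fun z _ => ?_
          ring
  have hfgnn : 0 ≤ ∑ p, f p * g p := by
    refine Finset.sum_nonneg fun p _ => mul_nonneg (mul_nonneg (Real.sqrt_nonneg _) ?_)
      (mul_nonneg (Real.sqrt_nonneg _) (hr0 _ _))
    exact mul_nonneg (hr0 _ _) (hr0 _ _)
  have cs := Finset.sum_mul_sq_le_sq_mul_sq Finset.univ f g
  have hbound : (∑ p, f p * g p) ^ 2 ≤ (d : ℝ) / γ * K ^ 3 := by
    calc (∑ p, f p * g p) ^ 2 ≤ (∑ p, f p ^ 2) * ∑ p, g p ^ 2 := cs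
      _ ≤ K ^ 2 * ((d : ℝ) / γ * K) := by
          refine mul_le_mul hf2 hg2 (Finset.sum_nonneg fun p _ => sq_nonneg _) (sq_nonneg K)
      _ = (d : ℝ) / γ * K ^ 3 := by ring
  have hsq : (∑ p, f p * g p) ≤ Real.sqrt ((d : ℝ) / γ * K ^ 3) :=
    (Real.le_sqrt hfgnn (mul_nonneg (div_nonneg (Nat.cast_nonneg d) hγ.le)
      (pow_nonneg hK0 3))).2 hbound
  calc (∑ x, ∑ y, ∑ z, 2 / (q x + q y) * (2 / (q y + q z)) * (r z x * r x y * r y z))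
      = ∑ p, f p * g p := hfg.symm
    _ ≤ Real.sqrt ((d : ℝ) / γ * K ^ 3) := hsq
    _ = Real.sqrt ((d : ℝ) / γ) * K ^ ((3 : ℝ) / 2) := by
        rw [Real.sqrt_mul (div_nonneg (Nat.cast_nonneg d) hγ.le)]
        congr 1
        rw [Real.sqrt_eq_rpow, ← Real.rpow_natCast K 3, ← Real.rpow_mul hK0]
        norm_num

lemma third_bound {d : ℕ} (γ : ℝ) (hγ : 0 < γ) (q : Fin d → ℝ) (hq : ∀ i, γ ≤ q i)
    (p : Fin d → ℝ) (hp : ∀ a, 0 ≤ p a) :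
    ∑ a, ∑ b, 2 / (q a + q b) * (2 / (q a + q b)) * (p a * p b) ≤
      2 * (d : ℝ) ^ 2 + (2 * (d : ℝ) / γ) * ∑ a, (p a - q a) ^ 2 / q a := by
  have hq0 : ∀ i, 0 < q i := fun i => lt_of_lt_of_le hγ (hq i)
  have key : ∀ a b, 2 / (q a + q b) * (2 / (q a + q b)) * (p a * p b) ≤
      2 + (p a - q a) ^ 2 / q a ^ 2 + (p b - q b) ^ 2 / q b ^ 2 := by
    intro a b
    have hqa := hq0 a
    have hqb := hq0 b
    have h2 : 2 / (q a + q b) * (2 / (q a + q b)) ≤ 1 / (q a * q b) := by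
      rw [div_mul_div_comm, div_le_div_iff₀ (by positivity) (by positivity)]
      nlinarith [sq_nonneg (q a - q b)]
    calc 2 / (q a + q b) * (2 / (q a + q b)) * (p a * p b)
        ≤ 1 / (q a * q b) * (p a * p b) :=
          mul_le_mul_of_nonneg_right h2 (mul_nonneg (hp a) (hp b))
      _ = p a / q a * (p b / q b) := by field_simp
      _ ≤ 2 + (p a / q a - 1) ^ 2 + (p b / q b - 1) ^ 2 := by
          nlinarith [sq_nonneg (p a / q a - p b / q b), sq_nonneg (p a / q a + p b / q b - 4)]
      _ = 2 + (p a - q a) ^ 2 / q a ^ 2 + (p b - q b) ^ 2 / q b ^ 2 := by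
          rw [div_sub_one (ne_of_gt hqa), div_sub_one (ne_of_gt hqb), div_pow, div_pow]
  have hE : ∀ a, (p a - q a) ^ 2 / q a ^ 2 ≤ 1 / γ * ((p a - q a) ^ 2 / q a) := by
    intro a
    have hqa := hq0 a
    rw [show 1 / γ * ((p a - q a) ^ 2 / q a) = (p a - q a) ^ 2 / (γ * q a) from by ring]
    exact div_le_div_of_nonneg_left (sq_nonneg _) (mul_pos hγ hqa) (by nlinarith [hq a])
  calc (∑ a, ∑ b, 2 / (q a + q b) * (2 / (q a + q b)) * (p a * p b))
      ≤ ∑ a, ∑ b, (2 + (p a - q a) ^ 2 / q a ^ 2 + (p b - q b) ^ 2 / q b ^ 2) :=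
        Finset.sum_le_sum fun a _ => Finset.sum_le_sum fun b _ => key a b
    _ = 2 * (d : ℝ) ^ 2 + (d : ℝ) * (∑ a, (p a - q a) ^ 2 / q a ^ 2)
        + (d : ℝ) * (∑ a, (p a - q a) ^ 2 / q a ^ 2) := by
        simp only [Finset.sum_add_distrib, Finset.sum_const, Finset.card_univ,
          Fintype.card_fin, nsmul_eq_mul, ← Finset.mul_sum]
        ring
    _ ≤ 2 * (d : ℝ) ^ 2 + (d : ℝ) * (1 / γ * ∑ a, (p a - q a) ^ 2 / q a)
        + (d : ℝ) * (1 / γ * ∑ a, (p a - q a) ^ 2 / q a) := by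
        have h := Finset.sum_le_sum fun a (_ : a ∈ Finset.univ) => hE a
        rw [← Finset.mul_sum] at h
        have hd : (0 : ℝ) ≤ (d : ℝ) := Nat.cast_nonneg d
        nlinarith [h, hd]
    _ = 2 * (d : ℝ) ^ 2 + (2 * (d : ℝ) / γ) * ∑ a, (p a - q a) ^ 2 / q a := by ring


/-- The miscellaneous trace inequalities used in the variance bound. -/
theorem misc_trace_inequalities (d : ℕ) (γ : ℝ) (hγ : 0 < γ)
    (q : Fin d → ℝ) (hq : ∀ i, γ ≤ q i) (hq1 : (∑ i, q i) = 1)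
    (ρ : Matrix (Fin d) (Fin d) ℂ) (hρ : IsState ρ)
    (σ : Matrix (Fin d) (Fin d) ℂ) (hσ : σ = Matrix.diagonal (fun i => ((q i : ℝ) : ℂ)))
    (Δ : Matrix (Fin d) (Fin d) ℂ) (hΔ : Δ = ρ - σ)
    (μ : ℝ) (hμ : μ = DBchi q ρ) :
    ((tensor3 σ Δ Δ * (Cst q 0 1 * Cst q 0 2)).trace).re ≤ 2 * μ ∧
    ((tensor3 Δ Δ Δ * (Cst q 0 1 * Cst q 0 2)).trace).re ≤
      Real.sqrt ((d : ℝ) / γ) * μ ^ ((3 : ℝ) / 2) ∧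
    ((tensor2 ρ ρ * (Cobs q * Cobs q)).trace).re ≤
      2 * (d : ℝ) ^ 2 + (2 * (d : ℝ) / γ) * μ ∧
    ((tensor3 ρ ρ ρ * (Cst q 0 1 * Cst q 0 2)).trace).re ≤
      1 + 4 * μ + Real.sqrt ((d : ℝ) / γ) * μ ^ ((3 : ℝ) / 2) := by
  subst hσ
  subst hΔ
  have hq0 : ∀ i, 0 < q i := fun i => lt_of_lt_of_le hγ (hq i)
  have hs0 : ∀ i j, 0 < q i + q j := fun i j => add_pos (hq0 i) (hq0 j)
  have hc0 : ∀ i j, 0 < 2 / (q i + q j) := fun i j => div_pos two_pos (hs0 i j)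
  have hherm : ρ.IsHermitian := hρ.1.1
  have hermσ : (Matrix.diagonal (fun i => ((q i : ℝ) : ℂ))).IsHermitian := by
    refine Matrix.isHermitian_diagonal_of_self_adjoint _ ?_
    show star (fun i => ((q i : ℝ) : ℂ)) = fun i => ((q i : ℝ) : ℂ)
    funext i
    simp [Complex.conj_ofReal]
  have hermΔ : ((ρ - Matrix.diagonal (fun i => ((q i : ℝ) : ℂ)))).IsHermitian := hherm.sub hermσ
  have hmulconj : ∀ x y, (ρ - Matrix.diagonal (fun i => ((q i : ℝ) : ℂ))) x y * (ρ - Matrix.diagonal (fun i => ((q i : ℝ) : ℂ))) y x =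
      ((‖(ρ - Matrix.diagonal (fun i => ((q i : ℝ) : ℂ))) x y‖ ^ 2 : ℝ) : ℂ) := by
    intro x y
    rw [← hermΔ.apply y x,
      show star ((ρ - Matrix.diagonal (fun i => ((q i : ℝ) : ℂ))) x y) = (starRingEnd ℂ) ((ρ - Matrix.diagonal (fun i => ((q i : ℝ) : ℂ))) x y) from rfl,
      Complex.mul_conj, ← Complex.sq_norm]
  have habs_symm : ∀ x y, ‖(ρ - Matrix.diagonal (fun i => ((q i : ℝ) : ℂ))) y x‖ = ‖(ρ - Matrix.diagonal (fun i => ((q i : ℝ) : ℂ))) x y‖ := by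
    intro x y
    rw [← hermΔ.apply y x,
      show star ((ρ - Matrix.diagonal (fun i => ((q i : ℝ) : ℂ))) x y) = (starRingEnd ℂ) ((ρ - Matrix.diagonal (fun i => ((q i : ℝ) : ℂ))) x y) from rfl,
      Complex.norm_conj]
  have htrΔ : (∑ x, (ρ - Matrix.diagonal (fun i => ((q i : ℝ) : ℂ))) x x) = 0 := by
    have h1 : ((ρ - Matrix.diagonal (fun i => ((q i : ℝ) : ℂ)))).trace = 0 := by
      rw [Matrix.trace_sub, hρ.2, Matrix.trace_diagonal, ← Complex.ofReal_sum, hq1]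
      norm_num
    simpa [Matrix.trace, Matrix.diag] using h1
  have hpval : ∀ a, ρ a a = (((ρ a a).re : ℝ) : ℂ) := fun a =>
    (hherm.coe_re_apply_self a).symm
  have hpnn : ∀ a, 0 ≤ (ρ a a).re := by
    intro a
    have h : (0 : ℂ) ≤ ρ a a := hρ.1.diag_nonneg
    have h2 := (Complex.le_def.1 h).1
    simpa using h2
  have hKμ : (∑ i, ∑ j, 2 / (q i + q j) * ‖(ρ - Matrix.diagonal (fun i => ((q i : ℝ) : ℂ))) i j‖ ^ 2) = μ := by
    rw [K_eq q hq0 hq1 ρ hρ, hμ]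
  have hμ0 : 0 ≤ μ := by
    rw [← hKμ]
    exact Finset.sum_nonneg fun i _ => Finset.sum_nonneg fun j _ =>
      mul_nonneg (le_of_lt (hc0 i j)) (sq_nonneg _)
  -- core bound for the σΔΔ sum
  have core5 : ((∑ x, ∑ y, ∑ z, ((2 / (q x + q y) * (2 / (q y + q z)) : ℝ) : ℂ) * (Matrix.diagonal (fun i => ((q i : ℝ) : ℂ)) z x * (ρ - Matrix.diagonal (fun i => ((q i : ℝ) : ℂ))) x y * (ρ - Matrix.diagonal (fun i => ((q i : ℝ) : ℂ))) y z))).re ≤ 2 * μ := by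
    rw [G_left]
    have e : ∀ x y : Fin d, ((2 / (q x + q y) * (2 / (q y + q x)) : ℝ) : ℂ) *
        (((q x : ℝ) : ℂ) * (ρ - Matrix.diagonal (fun i => ((q i : ℝ) : ℂ))) x y * (ρ - Matrix.diagonal (fun i => ((q i : ℝ) : ℂ))) y x) =
        ((2 / (q x + q y) * (2 / (q y + q x)) * (q x * ‖(ρ - Matrix.diagonal (fun i => ((q i : ℝ) : ℂ))) x y‖ ^ 2) : ℝ) : ℂ) := by
      intro x y
      rw [show ((q x : ℝ) : ℂ) * (ρ - Matrix.diagonal (fun i => ((q i : ℝ) : ℂ))) x y * (ρ - Matrix.diagonal (fun i => ((q i : ℝ) : ℂ))) y x =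
          ((q x : ℝ) : ℂ) * ((ρ - Matrix.diagonal (fun i => ((q i : ℝ) : ℂ))) x y * (ρ - Matrix.diagonal (fun i => ((q i : ℝ) : ℂ))) y x) from by ring, hmulconj x y]
      push_cast
      ring
    simp only [e]
    rw [show (∑ x, ∑ y, ((2 / (q x + q y) * (2 / (q y + q x)) *
          (q x * ‖(ρ - Matrix.diagonal (fun i => ((q i : ℝ) : ℂ))) x y‖ ^ 2) : ℝ) : ℂ)) =
        ((∑ x, ∑ y, 2 / (q x + q y) * (2 / (q y + q x)) *
          (q x * ‖(ρ - Matrix.diagonal (fun i => ((q i : ℝ) : ℂ))) x y‖ ^ 2) : ℝ) : ℂ) from by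
      rw [Complex.ofReal_sum]
      exact Finset.sum_congr rfl fun x _ => (Complex.ofReal_sum _ _).symm]
    rw [Complex.ofReal_re, ← hKμ, Finset.mul_sum]
    refine Finset.sum_le_sum fun x _ => ?_
    rw [Finset.mul_sum]
    refine Finset.sum_le_sum fun y _ => ?_
    have h1 : 2 / (q y + q x) * q x ≤ 2 := by
      rw [div_mul_eq_mul_div, div_le_iff₀ (hs0 y x)]
      nlinarith [hq0 y, hq0 x]
    nlinarith [mul_nonneg (mul_nonneg (le_of_lt (hc0 x y))
      (sq_nonneg (‖(ρ - Matrix.diagonal (fun i => ((q i : ℝ) : ℂ))) x y‖))) (sub_nonneg.2 h1)]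
  -- core bound for the ΔΔΔ sum
  have core8 : ((∑ x, ∑ y, ∑ z, ((2 / (q x + q y) * (2 / (q y + q z)) : ℝ) : ℂ) * ((ρ - Matrix.diagonal (fun i => ((q i : ℝ) : ℂ))) z x * (ρ - Matrix.diagonal (fun i => ((q i : ℝ) : ℂ))) x y * (ρ - Matrix.diagonal (fun i => ((q i : ℝ) : ℂ))) y z))).re ≤
      Real.sqrt ((d : ℝ) / γ) * μ ^ ((3 : ℝ) / 2) := by
    have habs : ∀ x y z : Fin d, ‖((2 / (q x + q y) * (2 / (q y + q z)) : ℝ) : ℂ) *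
        ((ρ - Matrix.diagonal (fun i => ((q i : ℝ) : ℂ))) z x * (ρ - Matrix.diagonal (fun i => ((q i : ℝ) : ℂ))) x y * (ρ - Matrix.diagonal (fun i => ((q i : ℝ) : ℂ))) y z)‖ =
        2 / (q x + q y) * (2 / (q y + q z)) *
          (‖(ρ - Matrix.diagonal (fun i => ((q i : ℝ) : ℂ))) z x‖ * ‖(ρ - Matrix.diagonal (fun i => ((q i : ℝ) : ℂ))) x y‖ * ‖(ρ - Matrix.diagonal (fun i => ((q i : ℝ) : ℂ))) y z‖) := by
      intro x y z
      rw [norm_mul, norm_mul, norm_mul, Complex.norm_real, Real.norm_eq_abs,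
        abs_of_pos (mul_pos (hc0 x y) (hc0 y z))]
    calc ((∑ x, ∑ y, ∑ z, ((2 / (q x + q y) * (2 / (q y + q z)) : ℝ) : ℂ) * ((ρ - Matrix.diagonal (fun i => ((q i : ℝ) : ℂ))) z x * (ρ - Matrix.diagonal (fun i => ((q i : ℝ) : ℂ))) x y * (ρ - Matrix.diagonal (fun i => ((q i : ℝ) : ℂ))) y z))).re
        ≤ ‖∑ x, ∑ y, ∑ z, ((2 / (q x + q y) * (2 / (q y + q z)) : ℝ) : ℂ) * ((ρ - Matrix.diagonal (fun i => ((q i : ℝ) : ℂ))) z x * (ρ - Matrix.diagonal (fun i => ((q i : ℝ) : ℂ))) x y * (ρ - Matrix.diagonal (fun i => ((q i : ℝ) : ℂ))) y z)‖ :=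
          Complex.re_le_norm _
      _ ≤ ∑ x, ‖∑ y, ∑ z, ((2 / (q x + q y) * (2 / (q y + q z)) : ℝ) : ℂ) * ((ρ - Matrix.diagonal (fun i => ((q i : ℝ) : ℂ))) z x * (ρ - Matrix.diagonal (fun i => ((q i : ℝ) : ℂ))) x y * (ρ - Matrix.diagonal (fun i => ((q i : ℝ) : ℂ))) y z)‖ :=
          norm_sum_le _ _
      _ ≤ ∑ x, ∑ y, ‖∑ z, ((2 / (q x + q y) * (2 / (q y + q z)) : ℝ) : ℂ) * ((ρ - Matrix.diagonal (fun i => ((q i : ℝ) : ℂ))) z x * (ρ - Matrix.diagonal (fun i => ((q i : ℝ) : ℂ))) x y * (ρ - Matrix.diagonal (fun i => ((q i : ℝ) : ℂ))) y z)‖ :=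
          Finset.sum_le_sum fun x _ => norm_sum_le _ _
      _ ≤ ∑ x, ∑ y, ∑ z, ‖((2 / (q x + q y) * (2 / (q y + q z)) : ℝ) : ℂ) * ((ρ - Matrix.diagonal (fun i => ((q i : ℝ) : ℂ))) z x * (ρ - Matrix.diagonal (fun i => ((q i : ℝ) : ℂ))) x y * (ρ - Matrix.diagonal (fun i => ((q i : ℝ) : ℂ))) y z)‖ :=
          Finset.sum_le_sum fun x _ => Finset.sum_le_sum fun y _ => norm_sum_le _ _
      _ = ∑ x, ∑ y, ∑ z, 2 / (q x + q y) * (2 / (q y + q z)) *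
            (‖(ρ - Matrix.diagonal (fun i => ((q i : ℝ) : ℂ))) z x‖ * ‖(ρ - Matrix.diagonal (fun i => ((q i : ℝ) : ℂ))) x y‖ * ‖(ρ - Matrix.diagonal (fun i => ((q i : ℝ) : ℂ))) y z‖) :=
          Finset.sum_congr rfl fun x _ => Finset.sum_congr rfl fun y _ =>
            Finset.sum_congr rfl fun z _ => habs x y z
      _ ≤ Real.sqrt ((d : ℝ) / γ) *
            (∑ i, ∑ j, 2 / (q i + q j) * ‖(ρ - Matrix.diagonal (fun i => ((q i : ℝ) : ℂ))) i j‖ ^ 2) ^ ((3 : ℝ) / 2) :=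
          CS_bound γ hγ q hq (fun i j => ‖(ρ - Matrix.diagonal (fun i => ((q i : ℝ) : ℂ))) i j‖)
            (fun i j => norm_nonneg _) habs_symm
      _ = Real.sqrt ((d : ℝ) / γ) * μ ^ ((3 : ℝ) / 2) := by rw [hKμ]
  -- evaluations of the diagonal-heavy sums
  have hG1 : ((∑ x, ∑ y, ∑ z, ((2 / (q x + q y) * (2 / (q y + q z)) : ℝ) : ℂ) * (Matrix.diagonal (fun i => ((q i : ℝ) : ℂ)) z x * Matrix.diagonal (fun i => ((q i : ℝ) : ℂ)) x y * Matrix.diagonal (fun i => ((q i : ℝ) : ℂ)) y z))) = 1 := by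
    rw [G_left]
    have e : ∀ x y : Fin d, ((2 / (q x + q y) * (2 / (q y + q x)) : ℝ) : ℂ) *
        (((q x : ℝ) : ℂ) * Matrix.diagonal (fun i => ((q i : ℝ) : ℂ)) x y * Matrix.diagonal (fun i => ((q i : ℝ) : ℂ)) y x) =
        (if x = y then ((q x : ℝ) : ℂ) else 0) := by
      intro x y
      by_cases h : x = y
      · subst h
        rw [Matrix.diagonal_apply_eq, if_pos rfl]
        have hr : (2 / (q x + q x) * (2 / (q x + q x)) * (q x * q x * q x) : ℝ) = q x := by
          have hqx : q x + q x ≠ 0 := ne_of_gt (add_pos (hq0 x) (hq0 x))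
          have hqx0 : q x ≠ 0 := (hq0 x).ne'
          field_simp
          ring
        rw [show ((2 / (q x + q x) * (2 / (q x + q x)) : ℝ) : ℂ) *
            (((q x : ℝ) : ℂ) * ((q x : ℝ) : ℂ) * ((q x : ℝ) : ℂ)) =
            ((2 / (q x + q x) * (2 / (q x + q x)) * (q x * q x * q x) : ℝ) : ℂ) from by
          push_cast; ring, hr]
      · rw [Matrix.diagonal_apply_ne _ h, if_neg h]
        ring
    simp only [e, Finset.sum_ite_eq, Finset.mem_univ, if_true]
    rw [← Complex.ofReal_sum, hq1]
    norm_num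
  have hG2 : ((∑ x, ∑ y, ∑ z, ((2 / (q x + q y) * (2 / (q y + q z)) : ℝ) : ℂ) * ((ρ - Matrix.diagonal (fun i => ((q i : ℝ) : ℂ))) z x * Matrix.diagonal (fun i => ((q i : ℝ) : ℂ)) x y * Matrix.diagonal (fun i => ((q i : ℝ) : ℂ)) y z))) = 0 := by
    rw [G_mid]
    have e : ∀ x z : Fin d, ((2 / (q x + q x) * (2 / (q x + q z)) : ℝ) : ℂ) *
        ((ρ - Matrix.diagonal (fun i => ((q i : ℝ) : ℂ))) z x * ((q x : ℝ) : ℂ) * Matrix.diagonal (fun i => ((q i : ℝ) : ℂ)) x z) =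
        (if x = z then (ρ - Matrix.diagonal (fun i => ((q i : ℝ) : ℂ))) x x else 0) := by
      intro x z
      by_cases h : x = z
      · subst h
        rw [Matrix.diagonal_apply_eq, if_pos rfl]
        have hr : (2 / (q x + q x) * (2 / (q x + q x)) * (q x * q x) : ℝ) = 1 := by
          have hqx : q x + q x ≠ 0 := ne_of_gt (add_pos (hq0 x) (hq0 x))
          have hqx0 : q x ≠ 0 := (hq0 x).ne'
          field_simp
          ring
        rw [show ((2 / (q x + q x) * (2 / (q x + q x)) : ℝ) : ℂ) *
            ((ρ - Matrix.diagonal (fun i => ((q i : ℝ) : ℂ))) x x * ((q x : ℝ) : ℂ) * ((q x : ℝ) : ℂ)) =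
            ((2 / (q x + q x) * (2 / (q x + q x)) * (q x * q x) : ℝ) : ℂ) * (ρ - Matrix.diagonal (fun i => ((q i : ℝ) : ℂ))) x x from by
          push_cast; ring, hr, Complex.ofReal_one, one_mul]
      · rw [Matrix.diagonal_apply_ne _ h, if_neg h]
        ring
    simp only [e, Finset.sum_ite_eq, Finset.mem_univ, if_true]
    exact htrΔ
  have hG3 : ((∑ x, ∑ y, ∑ z, ((2 / (q x + q y) * (2 / (q y + q z)) : ℝ) : ℂ) * (Matrix.diagonal (fun i => ((q i : ℝ) : ℂ)) z x * (ρ - Matrix.diagonal (fun i => ((q i : ℝ) : ℂ))) x y * Matrix.diagonal (fun i => ((q i : ℝ) : ℂ)) y z))) = 0 := by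
    rw [G_left]
    have e : ∀ x y : Fin d, ((2 / (q x + q y) * (2 / (q y + q x)) : ℝ) : ℂ) *
        (((q x : ℝ) : ℂ) * (ρ - Matrix.diagonal (fun i => ((q i : ℝ) : ℂ))) x y * Matrix.diagonal (fun i => ((q i : ℝ) : ℂ)) y x) =
        (if y = x then (ρ - Matrix.diagonal (fun i => ((q i : ℝ) : ℂ))) x x else 0) := by
      intro x y
      by_cases h : y = x
      · subst h
        rw [Matrix.diagonal_apply_eq, if_pos rfl]
        have hr : (2 / (q y + q y) * (2 / (q y + q y)) * (q y * q y) : ℝ) = 1 := by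
          have hqy : q y + q y ≠ 0 := ne_of_gt (add_pos (hq0 y) (hq0 y))
          have hqy0 : q y ≠ 0 := (hq0 y).ne'
          field_simp
          ring
        rw [show ((2 / (q y + q y) * (2 / (q y + q y)) : ℝ) : ℂ) *
            (((q y : ℝ) : ℂ) * (ρ - Matrix.diagonal (fun i => ((q i : ℝ) : ℂ))) y y * ((q y : ℝ) : ℂ)) =
            ((2 / (q y + q y) * (2 / (q y + q y)) * (q y * q y) : ℝ) : ℂ) * (ρ - Matrix.diagonal (fun i => ((q i : ℝ) : ℂ))) y y from by
          push_cast; ring, hr, Complex.ofReal_one, one_mul]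
      · rw [Matrix.diagonal_apply_ne _ h, if_neg h]
        ring
    simp only [e, Finset.sum_ite_eq', Finset.mem_univ, if_true]
    exact htrΔ
  have hG4 : ((∑ x, ∑ y, ∑ z, ((2 / (q x + q y) * (2 / (q y + q z)) : ℝ) : ℂ) * (Matrix.diagonal (fun i => ((q i : ℝ) : ℂ)) z x * Matrix.diagonal (fun i => ((q i : ℝ) : ℂ)) x y * (ρ - Matrix.diagonal (fun i => ((q i : ℝ) : ℂ))) y z))) = 0 := by
    rw [G_left]
    have e : ∀ x y : Fin d, ((2 / (q x + q y) * (2 / (q y + q x)) : ℝ) : ℂ) *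
        (((q x : ℝ) : ℂ) * Matrix.diagonal (fun i => ((q i : ℝ) : ℂ)) x y * (ρ - Matrix.diagonal (fun i => ((q i : ℝ) : ℂ))) y x) =
        (if x = y then (ρ - Matrix.diagonal (fun i => ((q i : ℝ) : ℂ))) x x else 0) := by
      intro x y
      by_cases h : x = y
      · subst h
        rw [Matrix.diagonal_apply_eq, if_pos rfl]
        have hr : (2 / (q x + q x) * (2 / (q x + q x)) * (q x * q x) : ℝ) = 1 := by
          have hqx : q x + q x ≠ 0 := ne_of_gt (add_pos (hq0 x) (hq0 x))
          have hqx0 : q x ≠ 0 := (hq0 x).ne'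
          field_simp
          ring
        rw [show ((2 / (q x + q x) * (2 / (q x + q x)) : ℝ) : ℂ) *
            (((q x : ℝ) : ℂ) * ((q x : ℝ) : ℂ) * (ρ - Matrix.diagonal (fun i => ((q i : ℝ) : ℂ))) x x) =
            ((2 / (q x + q x) * (2 / (q x + q x)) * (q x * q x) : ℝ) : ℂ) * (ρ - Matrix.diagonal (fun i => ((q i : ℝ) : ℂ))) x x from by
          push_cast; ring, hr, Complex.ofReal_one, one_mul]
      · rw [Matrix.diagonal_apply_ne _ h, if_neg h]
        ring
    simp only [e, Finset.sum_ite_eq, Finset.mem_univ, if_true]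
    exact htrΔ
  have hG6 : ((∑ x, ∑ y, ∑ z, ((2 / (q x + q y) * (2 / (q y + q z)) : ℝ) : ℂ) * ((ρ - Matrix.diagonal (fun i => ((q i : ℝ) : ℂ))) z x * Matrix.diagonal (fun i => ((q i : ℝ) : ℂ)) x y * (ρ - Matrix.diagonal (fun i => ((q i : ℝ) : ℂ))) y z))) = ((μ : ℝ) : ℂ) := by
    rw [G_mid]
    have e : ∀ x z : Fin d, ((2 / (q x + q x) * (2 / (q x + q z)) : ℝ) : ℂ) *
        ((ρ - Matrix.diagonal (fun i => ((q i : ℝ) : ℂ))) z x * ((q x : ℝ) : ℂ) * (ρ - Matrix.diagonal (fun i => ((q i : ℝ) : ℂ))) x z) =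
        ((2 / (q x + q z) * ‖(ρ - Matrix.diagonal (fun i => ((q i : ℝ) : ℂ))) x z‖ ^ 2 : ℝ) : ℂ) := by
      intro x z
      rw [show (ρ - Matrix.diagonal (fun i => ((q i : ℝ) : ℂ))) z x * ((q x : ℝ) : ℂ) * (ρ - Matrix.diagonal (fun i => ((q i : ℝ) : ℂ))) x z =
          ((q x : ℝ) : ℂ) * ((ρ - Matrix.diagonal (fun i => ((q i : ℝ) : ℂ))) x z * (ρ - Matrix.diagonal (fun i => ((q i : ℝ) : ℂ))) z x) from by ring, hmulconj x z]
      have hqx : q x + q x ≠ 0 := ne_of_gt (add_pos (hq0 x) (hq0 x))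
      have hqx0 : q x ≠ 0 := (hq0 x).ne'
      have hqxz : q x + q z ≠ 0 := ne_of_gt (hs0 x z)
      rw [show ((2 / (q x + q x) * (2 / (q x + q z)) : ℝ) : ℂ) *
          (((q x : ℝ) : ℂ) * ((‖(ρ - Matrix.diagonal (fun i => ((q i : ℝ) : ℂ))) x z‖ ^ 2 : ℝ) : ℂ)) =
          ((2 / (q x + q x) * (2 / (q x + q z)) * (q x * ‖(ρ - Matrix.diagonal (fun i => ((q i : ℝ) : ℂ))) x z‖ ^ 2) : ℝ) : ℂ)
          from by push_cast; ring]
      norm_cast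
      field_simp
      ring
    simp only [e]
    rw [show (∑ x, ∑ z, ((2 / (q x + q z) * ‖(ρ - Matrix.diagonal (fun i => ((q i : ℝ) : ℂ))) x z‖ ^ 2 : ℝ) : ℂ)) =
        ((∑ x, ∑ z, 2 / (q x + q z) * ‖(ρ - Matrix.diagonal (fun i => ((q i : ℝ) : ℂ))) x z‖ ^ 2 : ℝ) : ℂ) from by
      rw [Complex.ofReal_sum]
      exact Finset.sum_congr rfl fun x _ => (Complex.ofReal_sum _ _).symm]
    rw [hKμ]
  have hG7 : ((∑ x, ∑ y, ∑ z, ((2 / (q x + q y) * (2 / (q y + q z)) : ℝ) : ℂ) * ((ρ - Matrix.diagonal (fun i => ((q i : ℝ) : ℂ))) z x * (ρ - Matrix.diagonal (fun i => ((q i : ℝ) : ℂ))) x y * Matrix.diagonal (fun i => ((q i : ℝ) : ℂ)) y z))) = ((μ : ℝ) : ℂ) := by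
    rw [G_right]
    have e : ∀ x y : Fin d, ((2 / (q x + q y) * (2 / (q y + q y)) : ℝ) : ℂ) *
        ((ρ - Matrix.diagonal (fun i => ((q i : ℝ) : ℂ))) y x * (ρ - Matrix.diagonal (fun i => ((q i : ℝ) : ℂ))) x y * ((q y : ℝ) : ℂ)) =
        ((2 / (q x + q y) * ‖(ρ - Matrix.diagonal (fun i => ((q i : ℝ) : ℂ))) x y‖ ^ 2 : ℝ) : ℂ) := by
      intro x y
      rw [show (ρ - Matrix.diagonal (fun i => ((q i : ℝ) : ℂ))) y x * (ρ - Matrix.diagonal (fun i => ((q i : ℝ) : ℂ))) x y * ((q y : ℝ) : ℂ) =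
          ((q y : ℝ) : ℂ) * ((ρ - Matrix.diagonal (fun i => ((q i : ℝ) : ℂ))) x y * (ρ - Matrix.diagonal (fun i => ((q i : ℝ) : ℂ))) y x) from by ring, hmulconj x y]
      have hqy : q y + q y ≠ 0 := ne_of_gt (add_pos (hq0 y) (hq0 y))
      have hqy0 : q y ≠ 0 := (hq0 y).ne'
      have hqxy : q x + q y ≠ 0 := ne_of_gt (hs0 x y)
      rw [show ((2 / (q x + q y) * (2 / (q y + q y)) : ℝ) : ℂ) *
          (((q y : ℝ) : ℂ) * ((‖(ρ - Matrix.diagonal (fun i => ((q i : ℝ) : ℂ))) x y‖ ^ 2 : ℝ) : ℂ)) =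
          ((2 / (q x + q y) * (2 / (q y + q y)) * (q y * ‖(ρ - Matrix.diagonal (fun i => ((q i : ℝ) : ℂ))) x y‖ ^ 2) : ℝ) : ℂ)
          from by push_cast; ring]
      norm_cast
      field_simp
      ring
    simp only [e]
    rw [show (∑ x, ∑ y, ((2 / (q x + q y) * ‖(ρ - Matrix.diagonal (fun i => ((q i : ℝ) : ℂ))) x y‖ ^ 2 : ℝ) : ℂ)) =
        ((∑ x, ∑ y, 2 / (q x + q y) * ‖(ρ - Matrix.diagonal (fun i => ((q i : ℝ) : ℂ))) x y‖ ^ 2 : ℝ) : ℂ) from by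
      rw [Complex.ofReal_sum]
      exact Finset.sum_congr rfl fun x _ => (Complex.ofReal_sum _ _).symm]
    rw [hKμ]
  refine ⟨?_, ?_, ?_, ?_⟩
  · rw [trace3_formula]
    exact core5
  · rw [trace3_formula]
    exact core8
  · rw [trace2_formula]
    have e : ∀ a b : Fin d, ((2 / (q a + q b) * (2 / (q a + q b)) : ℝ) : ℂ) * (ρ a a * ρ b b) =
        ((2 / (q a + q b) * (2 / (q a + q b)) * ((ρ a a).re * (ρ b b).re) : ℝ) : ℂ) := by
      intro a b
      conv_lhs => rw [hpval a, hpval b]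
      push_cast
      ring
    simp only [e]
    rw [show (∑ a, ∑ b, ((2 / (q a + q b) * (2 / (q a + q b)) *
          ((ρ a a).re * (ρ b b).re) : ℝ) : ℂ)) =
        ((∑ a, ∑ b, 2 / (q a + q b) * (2 / (q a + q b)) *
          ((ρ a a).re * (ρ b b).re) : ℝ) : ℂ) from by
      rw [Complex.ofReal_sum]
      exact Finset.sum_congr rfl fun a _ => (Complex.ofReal_sum _ _).symm]
    rw [Complex.ofReal_re]
    refine le_trans (third_bound γ hγ q hq (fun a => (ρ a a).re) hpnn) ?_
    have hD : (∑ a, ((ρ a a).re - q a) ^ 2 / q a) ≤ μ := by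
      rw [← hKμ]
      calc (∑ a, ((ρ a a).re - q a) ^ 2 / q a)
          = ∑ a, 2 / (q a + q a) * ‖(ρ - Matrix.diagonal (fun i => ((q i : ℝ) : ℂ))) a a‖ ^ 2 := by
            refine Finset.sum_congr rfl fun a _ => ?_
            rw [Matrix.sub_apply, Matrix.diagonal_apply_eq]
            rw [show ρ a a - ((q a : ℝ) : ℂ) = (((ρ a a).re - q a : ℝ) : ℂ) from by
              conv_lhs => rw [hpval a]
              push_cast
              ring]
            rw [Complex.norm_real, Real.norm_eq_abs, sq_abs]
            have hqa : q a ≠ 0 := (hq0 a).ne'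
            have hqaa : q a + q a ≠ 0 := ne_of_gt (add_pos (hq0 a) (hq0 a))
            field_simp
            ring
        _ ≤ ∑ a, ∑ j, 2 / (q a + q j) * ‖(ρ - Matrix.diagonal (fun i => ((q i : ℝ) : ℂ))) a j‖ ^ 2 :=
            Finset.sum_le_sum fun a _ => Finset.single_le_sum
              (f := fun j => 2 / (q a + q j) * ‖(ρ - Matrix.diagonal (fun i => ((q i : ℝ) : ℂ))) a j‖ ^ 2)
              (fun j _ => mul_nonneg (le_of_lt (hc0 a j)) (sq_nonneg _)) (Finset.mem_univ a)
    have h2 : (0 : ℝ) ≤ 2 * (d : ℝ) / γ := div_nonneg (by positivity) hγ.le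
    nlinarith [mul_le_mul_of_nonneg_left hD h2]
  · rw [trace3_formula]
    have hsplit : ∀ i j : Fin d, ρ i j = Matrix.diagonal (fun i => ((q i : ℝ) : ℂ)) i j + (ρ - Matrix.diagonal (fun i => ((q i : ℝ) : ℂ))) i j := by
      intro i j
      rw [Matrix.sub_apply]
      ring
    have expand : ((∑ x, ∑ y, ∑ z, ((2 / (q x + q y) * (2 / (q y + q z)) : ℝ) : ℂ) * (ρ z x * ρ x y * ρ y z))) =
        ((∑ x, ∑ y, ∑ z, ((2 / (q x + q y) * (2 / (q y + q z)) : ℝ) : ℂ) * (Matrix.diagonal (fun i => ((q i : ℝ) : ℂ)) z x * Matrix.diagonal (fun i => ((q i : ℝ) : ℂ)) x y * Matrix.diagonal (fun i => ((q i : ℝ) : ℂ)) y z))) +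
        (((∑ x, ∑ y, ∑ z, ((2 / (q x + q y) * (2 / (q y + q z)) : ℝ) : ℂ) * ((ρ - Matrix.diagonal (fun i => ((q i : ℝ) : ℂ))) z x * Matrix.diagonal (fun i => ((q i : ℝ) : ℂ)) x y * Matrix.diagonal (fun i => ((q i : ℝ) : ℂ)) y z))) +
        (((∑ x, ∑ y, ∑ z, ((2 / (q x + q y) * (2 / (q y + q z)) : ℝ) : ℂ) * (Matrix.diagonal (fun i => ((q i : ℝ) : ℂ)) z x * (ρ - Matrix.diagonal (fun i => ((q i : ℝ) : ℂ))) x y * Matrix.diagonal (fun i => ((q i : ℝ) : ℂ)) y z))) +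
        (((∑ x, ∑ y, ∑ z, ((2 / (q x + q y) * (2 / (q y + q z)) : ℝ) : ℂ) * (Matrix.diagonal (fun i => ((q i : ℝ) : ℂ)) z x * Matrix.diagonal (fun i => ((q i : ℝ) : ℂ)) x y * (ρ - Matrix.diagonal (fun i => ((q i : ℝ) : ℂ))) y z))) +
        (((∑ x, ∑ y, ∑ z, ((2 / (q x + q y) * (2 / (q y + q z)) : ℝ) : ℂ) * (Matrix.diagonal (fun i => ((q i : ℝ) : ℂ)) z x * (ρ - Matrix.diagonal (fun i => ((q i : ℝ) : ℂ))) x y * (ρ - Matrix.diagonal (fun i => ((q i : ℝ) : ℂ))) y z))) +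
        (((∑ x, ∑ y, ∑ z, ((2 / (q x + q y) * (2 / (q y + q z)) : ℝ) : ℂ) * ((ρ - Matrix.diagonal (fun i => ((q i : ℝ) : ℂ))) z x * Matrix.diagonal (fun i => ((q i : ℝ) : ℂ)) x y * (ρ - Matrix.diagonal (fun i => ((q i : ℝ) : ℂ))) y z))) +
        (((∑ x, ∑ y, ∑ z, ((2 / (q x + q y) * (2 / (q y + q z)) : ℝ) : ℂ) * ((ρ - Matrix.diagonal (fun i => ((q i : ℝ) : ℂ))) z x * (ρ - Matrix.diagonal (fun i => ((q i : ℝ) : ℂ))) x y * Matrix.diagonal (fun i => ((q i : ℝ) : ℂ)) y z))) +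
        ((∑ x, ∑ y, ∑ z, ((2 / (q x + q y) * (2 / (q y + q z)) : ℝ) : ℂ) * ((ρ - Matrix.diagonal (fun i => ((q i : ℝ) : ℂ))) z x * (ρ - Matrix.diagonal (fun i => ((q i : ℝ) : ℂ))) x y * (ρ - Matrix.diagonal (fun i => ((q i : ℝ) : ℂ))) y z))))))))) := by
      calc ((∑ x, ∑ y, ∑ z, ((2 / (q x + q y) * (2 / (q y + q z)) : ℝ) : ℂ) * (ρ z x * ρ x y * ρ y z)))
          = ∑ x, ∑ y, ∑ z,
            (((2 / (q x + q y) * (2 / (q y + q z)) : ℝ) : ℂ) * (Matrix.diagonal (fun i => ((q i : ℝ) : ℂ)) z x * Matrix.diagonal (fun i => ((q i : ℝ) : ℂ)) x y * Matrix.diagonal (fun i => ((q i : ℝ) : ℂ)) y z) +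
            (((2 / (q x + q y) * (2 / (q y + q z)) : ℝ) : ℂ) * ((ρ - Matrix.diagonal (fun i => ((q i : ℝ) : ℂ))) z x * Matrix.diagonal (fun i => ((q i : ℝ) : ℂ)) x y * Matrix.diagonal (fun i => ((q i : ℝ) : ℂ)) y z) +
            (((2 / (q x + q y) * (2 / (q y + q z)) : ℝ) : ℂ) * (Matrix.diagonal (fun i => ((q i : ℝ) : ℂ)) z x * (ρ - Matrix.diagonal (fun i => ((q i : ℝ) : ℂ))) x y * Matrix.diagonal (fun i => ((q i : ℝ) : ℂ)) y z) +
            (((2 / (q x + q y) * (2 / (q y + q z)) : ℝ) : ℂ) * (Matrix.diagonal (fun i => ((q i : ℝ) : ℂ)) z x * Matrix.diagonal (fun i => ((q i : ℝ) : ℂ)) x y * (ρ - Matrix.diagonal (fun i => ((q i : ℝ) : ℂ))) y z) +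
            (((2 / (q x + q y) * (2 / (q y + q z)) : ℝ) : ℂ) * (Matrix.diagonal (fun i => ((q i : ℝ) : ℂ)) z x * (ρ - Matrix.diagonal (fun i => ((q i : ℝ) : ℂ))) x y * (ρ - Matrix.diagonal (fun i => ((q i : ℝ) : ℂ))) y z) +
            (((2 / (q x + q y) * (2 / (q y + q z)) : ℝ) : ℂ) * ((ρ - Matrix.diagonal (fun i => ((q i : ℝ) : ℂ))) z x * Matrix.diagonal (fun i => ((q i : ℝ) : ℂ)) x y * (ρ - Matrix.diagonal (fun i => ((q i : ℝ) : ℂ))) y z) +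
            (((2 / (q x + q y) * (2 / (q y + q z)) : ℝ) : ℂ) * ((ρ - Matrix.diagonal (fun i => ((q i : ℝ) : ℂ))) z x * (ρ - Matrix.diagonal (fun i => ((q i : ℝ) : ℂ))) x y * Matrix.diagonal (fun i => ((q i : ℝ) : ℂ)) y z) +
            ((2 / (q x + q y) * (2 / (q y + q z)) : ℝ) : ℂ) * ((ρ - Matrix.diagonal (fun i => ((q i : ℝ) : ℂ))) z x * (ρ - Matrix.diagonal (fun i => ((q i : ℝ) : ℂ))) x y * (ρ - Matrix.diagonal (fun i => ((q i : ℝ) : ℂ))) y z)))))))) := by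
            refine Finset.sum_congr rfl fun x _ => Finset.sum_congr rfl fun y _ =>
              Finset.sum_congr rfl fun z _ => ?_
            rw [hsplit z x, hsplit x y, hsplit y z]
            ring
        _ = _ := by simp only [Finset.sum_add_distrib]
    rw [expand, hG1, hG2, hG3, hG4, hG6, hG7]
    simp only [Complex.add_re, Complex.one_re, Complex.zero_re, Complex.ofReal_re]
    linarith [core5, core8]
end
end
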